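/- arXiv:2505.01971 — 4 statements merged into one kernel-verified Lean document; each statement's English description precedes it below -/
import Mathlib

section
/- Let n ≥ 2 and let a = (a_1, …, a_n) be any vector of real numbers. If the random vector X has the permutation distribution on a (i.e., X = (a_{π(1)}, …, a_{π(n)}) for a uniformly random permutation π of {1,…,n}), then X is negatively regression dependent (NRD): for all disjoint subsets I, J of {1,…,n} and all vectors x_J ≤ x_J* componentwise such that both conditioning events have positive probability, [X_I | X_J = x_J] ≥_st [X_I | X_J = x_J*]. -/
open scoped Classical
open Finset

noncomputable section

/-- Probability of the event `A` on a finite sample space with weights `w`. -/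
def Pr {Ω : Type*} [Fintype Ω] (w : Ω → ℝ) (A : Ω → Prop) : ℝ :=
  ∑ ω : Ω, if A ω then w ω else 0

/-- Expectation of `f` on a finite sample space with weights `w`. -/
def Expec {Ω : Type*} [Fintype Ω] (w : Ω → ℝ) (f : Ω → ℝ) : ℝ :=
  ∑ ω : Ω, w ω * f ω

/-- Conditional expectation of `f` given the event `A` under weights `w`. -/
def CExp {Ω : Type*} [Fintype Ω] (w : Ω → ℝ) (A : Ω → Prop) (f : Ω → ℝ) : ℝ :=
  (∑ ω : Ω, if A ω then w ω * f ω else 0) / Pr w A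

/-- `[X_I | A] ≤_st [X_I | B]` : the conditional distribution of the subvector `X_I`
given the event `A` is dominated, in the usual stochastic order, by the conditional
distribution of `X_I` given `B`; i.e. conditional expectations of every bounded
coordinatewise increasing function compare. -/
def CondSubvecStochLE {Ω : Type*} [Fintype Ω] {n : ℕ} (w : Ω → ℝ)
    (X : Ω → Fin n → ℝ) (I : Finset (Fin n)) (A B : Ω → Prop) : Prop :=
  ∀ φ : ({i : Fin n // i ∈ I} → ℝ) → ℝ, Monotone φ → (∃ C, ∀ v, |φ v| ≤ C) →
    CExp w A (fun ω => φ fun i => X ω i.1) ≤ CExp w B (fun ω => φ fun i => X ω i.1)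

/-- Negative regression dependence: `[X_I | X_J = x_J] ≥_st [X_I | X_J = x_J*]`
whenever `x_J ≤ x_J*` componentwise and both conditioning events have
positive probability. -/
def IsNRD {Ω : Type*} [Fintype Ω] {n : ℕ} (w : Ω → ℝ) (X : Ω → Fin n → ℝ) : Prop :=
  ∀ I J : Finset (Fin n), Disjoint I J → ∀ x y : Fin n → ℝ, (∀ j ∈ J, x j ≤ y j) →
    0 < Pr w (fun ω => ∀ j ∈ J, X ω j = x j) →
    0 < Pr w (fun ω => ∀ j ∈ J, X ω j = y j) →
    CondSubvecStochLE w X I (fun ω => ∀ j ∈ J, X ω j = y j)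
      (fun ω => ∀ j ∈ J, X ω j = x j)

/-- Negative left-tail dependence: `[X_I | X_J ≤ x_J] ≥_st [X_I | X_J ≤ x_J*]`
whenever `x_J ≤ x_J*` componentwise and both conditioning events have
positive probability. -/
def IsNLTD {Ω : Type*} [Fintype Ω] {n : ℕ} (w : Ω → ℝ) (X : Ω → Fin n → ℝ) : Prop :=
  ∀ I J : Finset (Fin n), Disjoint I J → ∀ x y : Fin n → ℝ, (∀ j ∈ J, x j ≤ y j) →
    0 < Pr w (fun ω => ∀ j ∈ J, X ω j ≤ x j) →
    0 < Pr w (fun ω => ∀ j ∈ J, X ω j ≤ y j) →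
    CondSubvecStochLE w X I (fun ω => ∀ j ∈ J, X ω j ≤ y j)
      (fun ω => ∀ j ∈ J, X ω j ≤ x j)

/-- Negative right-tail dependence: `[X_I | X_J > x_J] ≥_st [X_I | X_J > x_J*]`
whenever `x_J ≤ x_J*` componentwise and both conditioning events have
positive probability. -/
def IsNRTD {Ω : Type*} [Fintype Ω] {n : ℕ} (w : Ω → ℝ) (X : Ω → Fin n → ℝ) : Prop :=
  ∀ I J : Finset (Fin n), Disjoint I J → ∀ x y : Fin n → ℝ, (∀ j ∈ J, x j ≤ y j) →
    0 < Pr w (fun ω => ∀ j ∈ J, x j < X ω j) →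
    0 < Pr w (fun ω => ∀ j ∈ J, y j < X ω j) →
    CondSubvecStochLE w X I (fun ω => ∀ j ∈ J, y j < X ω j)
      (fun ω => ∀ j ∈ J, x j < X ω j)

/-- Negative association on a finite weighted sample space:
`Cov(ψ₁(X_{A₁}), ψ₂(X_{A₂})) ≤ 0` for disjoint `A₁, A₂` and bounded
coordinatewise increasing `ψ₁, ψ₂`. -/
def IsNAfin {Ω : Type*} [Fintype Ω] {n : ℕ} (w : Ω → ℝ) (X : Ω → Fin n → ℝ) : Prop :=
  ∀ A₁ A₂ : Finset (Fin n), Disjoint A₁ A₂ →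
    ∀ ψ₁ : ({i : Fin n // i ∈ A₁} → ℝ) → ℝ, ∀ ψ₂ : ({i : Fin n // i ∈ A₂} → ℝ) → ℝ,
      Monotone ψ₁ → Monotone ψ₂ → (∃ C, ∀ v, |ψ₁ v| ≤ C) → (∃ C, ∀ v, |ψ₂ v| ≤ C) →
      Expec w (fun ω => (ψ₁ fun i => X ω i.1) * (ψ₂ fun i => X ω i.1))
        ≤ Expec w (fun ω => ψ₁ fun i => X ω i.1) * Expec w (fun ω => ψ₂ fun i => X ω i.1)

/-- The uniform distribution on the permutations of `Fin n`. -/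
def unifPerm (n : ℕ) : Equiv.Perm (Fin n) → ℝ := fun _ => (Nat.factorial n : ℝ)⁻¹

/-- The random vector with the permutation distribution on `a`:
`X = (a_{σ(1)}, …, a_{σ(n)})` for a uniformly random permutation `σ`. -/
def permVec {n : ℕ} (a : Fin n → ℝ) (σ : Equiv.Perm (Fin n)) : Fin n → ℝ :=
  fun i => a (σ i)


lemma exists_matching {n : ℕ} (a : Fin n → ℝ) :
    ∀ k : ℕ, ∀ A B : Finset (Fin n), A.card = k → B.card = k →
    (∀ r : ℝ, (A.filter fun i => r < a i).card ≤ (B.filter fun i => r < a i).card) →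
    ∃ u : Fin n → Fin n, Set.BijOn u ↑A ↑B ∧ ∀ i ∈ A, a i ≤ a (u i) := by
  intro k
  induction k with
  | zero =>
    intro A B hA hB _
    have hA' : A = ∅ := Finset.card_eq_zero.mp hA
    have hB' : B = ∅ := Finset.card_eq_zero.mp hB
    subst hA'; subst hB'
    exact ⟨id, by simp [Set.BijOn], by simp⟩
  | succ k ih =>
    intro A B hA hB hcount
    have hAne : A.Nonempty := Finset.card_pos.mp (by omega)
    have hBne : B.Nonempty := Finset.card_pos.mp (by omega)
    obtain ⟨s, hsA, hsmax⟩ := A.exists_max_image a hAne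
    obtain ⟨t, htB, htmax⟩ := B.exists_max_image a hBne
    have hst : a s ≤ a t := by
      by_contra h
      push_neg at h
      have h1 : s ∈ A.filter fun i => a t < a i := Finset.mem_filter.mpr ⟨hsA, h⟩
      have h2 : (B.filter fun i => a t < a i) = ∅ := by
        apply Finset.filter_eq_empty_iff.mpr
        intro b hb
        exact not_lt.mpr (htmax b hb)
      have := hcount (a t)
      rw [h2] at this
      simp at this
      exact absurd (this hsA) (not_le.mpr h)
    have hA' : (A.erase s).card = k := by rw [Finset.card_erase_of_mem hsA]; omega
    have hB' : (B.erase t).card = k := by rw [Finset.card_erase_of_mem htB]; omega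
    have hcount' : ∀ r : ℝ, ((A.erase s).filter fun i => r < a i).card ≤
        ((B.erase t).filter fun i => r < a i).card := by
      intro r
      rw [Finset.filter_erase, Finset.filter_erase]
      by_cases hr : r < a s
      · have hs' : s ∈ A.filter fun i => r < a i := Finset.mem_filter.mpr ⟨hsA, hr⟩
        have ht' : t ∈ B.filter fun i => r < a i := Finset.mem_filter.mpr ⟨htB, lt_of_lt_of_le hr hst⟩
        rw [Finset.card_erase_of_mem hs', Finset.card_erase_of_mem ht']
        exact Nat.sub_le_sub_right (hcount r) 1
      · have : (A.filter fun i => r < a i) = ∅ := by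
          apply Finset.filter_eq_empty_iff.mpr
          intro i hi
          exact fun h => hr (lt_of_lt_of_le h (hsmax i hi))
        rw [this]
        simp
    obtain ⟨u', hu'bij, hu'le⟩ := ih (A.erase s) (B.erase t) hA' hB' hcount'
    refine ⟨Function.update u' s t, ⟨?_, ?_, ?_⟩, ?_⟩
    · intro i hi
      simp only [Finset.mem_coe] at hi ⊢
      by_cases h : i = s
      · subst h; rw [Function.update_self]; exact htB
      · rw [Function.update_of_ne h]
        have : u' i ∈ B.erase t := hu'bij.mapsTo (Finset.mem_coe.mpr (Finset.mem_erase.mpr ⟨h, hi⟩))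
        exact Finset.mem_of_mem_erase this
    · intro i hi j hj hij
      simp only [Finset.mem_coe] at hi hj
      by_cases h1 : i = s <;> by_cases h2 : j = s
      · rw [h1, h2]
      · exfalso
        rw [h1, Function.update_self, Function.update_of_ne h2] at hij
        have : u' j ∈ B.erase t := hu'bij.mapsTo (Finset.mem_coe.mpr (Finset.mem_erase.mpr ⟨h2, hj⟩))
        exact (Finset.mem_erase.mp this).1 hij.symm
      · exfalso
        rw [h2, Function.update_self, Function.update_of_ne h1] at hij
        have : u' i ∈ B.erase t := hu'bij.mapsTo (Finset.mem_coe.mpr (Finset.mem_erase.mpr ⟨h1, hi⟩))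
        exact (Finset.mem_erase.mp this).1 hij
      · rw [Function.update_of_ne h1, Function.update_of_ne h2] at hij
        exact hu'bij.injOn (Finset.mem_coe.mpr (Finset.mem_erase.mpr ⟨h1, hi⟩))
          (Finset.mem_coe.mpr (Finset.mem_erase.mpr ⟨h2, hj⟩)) hij
    · intro b hb
      simp only [Finset.mem_coe] at hb
      by_cases h : b = t
      · exact ⟨s, Finset.mem_coe.mpr hsA, by rw [Function.update_self, h]⟩
      · obtain ⟨i, hi, hib⟩ := hu'bij.surjOn (Finset.mem_coe.mpr (Finset.mem_erase.mpr ⟨h, hb⟩))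
        simp only [Finset.mem_coe, Finset.mem_erase] at hi
        exact ⟨i, Finset.mem_coe.mpr hi.2, by rw [Function.update_of_ne hi.1]; exact hib⟩
    · intro i hi
      by_cases h : i = s
      · subst h; rw [Function.update_self]; exact hst
      · rw [Function.update_of_ne h]
        exact hu'le i (Finset.mem_erase.mpr ⟨h, hi⟩)

-- complement counting
lemma compl_count {n : ℕ} (p : Fin n → Prop) (S T : Finset (Fin n))
    (h : (S.filter p).card ≤ (T.filter p).card) :
    (Tᶜ.filter p).card ≤ (Sᶜ.filter p).card := by
  have hS : (S.filter p).card + (Sᶜ.filter p).card = (Finset.univ.filter p).card := by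
    rw [← Finset.card_union_of_disjoint, ← Finset.filter_union, Finset.union_compl]
    exact Finset.disjoint_filter_filter (disjoint_compl_right)
  have hT : (T.filter p).card + (Tᶜ.filter p).card = (Finset.univ.filter p).card := by
    rw [← Finset.card_union_of_disjoint, ← Finset.filter_union, Finset.union_compl]
    exact Finset.disjoint_filter_filter (disjoint_compl_right)
  omega

noncomputable section

def mkPerm {n : ℕ} (f : Fin n → Fin n) : Equiv.Perm (Fin n) :=
  if h : Function.Bijective f then Equiv.ofBijective f h else 1

lemma mkPerm_apply {n : ℕ} {f : Fin n → Fin n} (h : Function.Bijective f) :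
    ⇑(mkPerm f) = f := by
  rw [mkPerm, dif_pos h]; rfl

lemma mkPerm_coe {n : ℕ} (e : Equiv.Perm (Fin n)) : mkPerm ⇑e = e := by
  exact Equiv.coe_fn_injective (mkPerm_apply e.bijective)

def matchFun {n : ℕ} (a : Fin n → ℝ) (S T : Finset (Fin n)) : Fin n → Fin n :=
  if h : ∃ u : Fin n → Fin n, Set.BijOn u ↑Tᶜ ↑Sᶜ ∧ ∀ i ∈ Tᶜ, a i ≤ a (u i)
  then h.choose else id

lemma matchFun_spec {n : ℕ} (a : Fin n → ℝ) (S T : Finset (Fin n))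
    (h : ∃ u : Fin n → Fin n, Set.BijOn u ↑Tᶜ ↑Sᶜ ∧ ∀ i ∈ Tᶜ, a i ≤ a (u i)) :
    Set.BijOn (matchFun a S T) ↑Tᶜ ↑Sᶜ ∧ ∀ i ∈ Tᶜ, a i ≤ a (matchFun a S T i) := by
  rw [matchFun, dif_pos h]; exact h.choose_spec

def thetaP {n : ℕ} [Nonempty (Fin n)] (a : Fin n → ℝ) (J : Finset (Fin n))
    (p : Equiv.Perm (Fin n) × Equiv.Perm (Fin n)) :
    Equiv.Perm (Fin n) × Equiv.Perm (Fin n) :=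
  (mkPerm (fun i => if i ∈ J then p.1 i else
      matchFun a (J.image ⇑p.1) (J.image ⇑p.2) (p.2 i)),
   mkPerm (fun i => if i ∈ J then p.2 i else
      Function.invFunOn (matchFun a (J.image ⇑p.1) (J.image ⇑p.2)) ↑(J.image ⇑p.2)ᶜ (p.1 i)))


lemma theta_core {n : ℕ} [Nonempty (Fin n)] (a x y : Fin n → ℝ) (J : Finset (Fin n))
    (hxy : ∀ j ∈ J, x j ≤ y j) (p : Equiv.Perm (Fin n) × Equiv.Perm (Fin n))
    (h1 : ∀ j ∈ J, a (p.1 j) = x j) (h2 : ∀ j ∈ J, a (p.2 j) = y j) :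
    (∀ j ∈ J, a ((thetaP a J p).1 j) = x j) ∧
    (∀ j ∈ J, a ((thetaP a J p).2 j) = y j) ∧
    thetaP a J (thetaP a J p) = p ∧
    (∀ i, i ∉ J → a (p.2 i) ≤ a ((thetaP a J p).1 i)) := by
  classical
  -- membership facts
  have hmS : ∀ j ∈ J, p.1 j ∈ J.image ⇑p.1 := fun j hj => Finset.mem_image_of_mem _ hj
  have hmT : ∀ j ∈ J, p.2 j ∈ J.image ⇑p.2 := fun j hj => Finset.mem_image_of_mem _ hj
  have hmSc : ∀ i, i ∉ J → p.1 i ∈ (J.image ⇑p.1)ᶜ := by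
    intro i hi
    rw [Finset.mem_compl]
    intro h
    obtain ⟨j, hj, hji⟩ := Finset.mem_image.mp h
    exact hi (p.1.injective hji ▸ hj)
  have hmTc : ∀ i, i ∉ J → p.2 i ∈ (J.image ⇑p.2)ᶜ := by
    intro i hi
    rw [Finset.mem_compl]
    intro h
    obtain ⟨j, hj, hji⟩ := Finset.mem_image.mp h
    exact hi (p.2.injective hji ▸ hj)
  -- existence of the monotone matching between complements
  have hex : ∃ u : Fin n → Fin n, Set.BijOn u ↑(J.image ⇑p.2)ᶜ ↑(J.image ⇑p.1)ᶜ ∧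
      ∀ i ∈ (J.image ⇑p.2)ᶜ, a i ≤ a (u i) := by
    apply exists_matching a ((J.image ⇑p.2)ᶜ).card _ _ rfl
    · rw [Finset.card_compl, Finset.card_compl,
        Finset.card_image_of_injective _ p.1.injective,
        Finset.card_image_of_injective _ p.2.injective]
    · intro r
      apply compl_count
      apply Finset.card_le_card_of_injOn (⇑p.2 ∘ ⇑p.1.symm)
      · intro s hs
        obtain ⟨hs1, hs2⟩ := Finset.mem_filter.mp hs
        obtain ⟨j, hj, hjs⟩ := Finset.mem_image.mp hs1
        have hjj : p.1.symm s = j := by rw [← hjs]; exact p.1.symm_apply_apply j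
        refine Finset.mem_filter.mpr ⟨?_, ?_⟩
        · simp only [Function.comp_apply, hjj]; exact hmT j hj
        · simp only [Function.comp_apply, hjj]
          calc r < a s := hs2
            _ = x j := by rw [← hjs]; exact h1 j hj
            _ ≤ y j := hxy j hj
            _ = a (p.2 j) := (h2 j hj).symm
      · intro s _ t _ hst
        simpa using p.1.symm.injective (p.2.injective hst)
  have hU := matchFun_spec a (J.image ⇑p.1) (J.image ⇑p.2) hex
  set U := matchFun a (J.image ⇑p.1) (J.image ⇑p.2) with hUdef
  set W := Function.invFunOn U ↑(J.image ⇑p.2)ᶜ with hWdef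
  have hWex : ∀ b ∈ (J.image ⇑p.1)ᶜ, ∃ t ∈ (↑(J.image ⇑p.2)ᶜ : Set (Fin n)), U t = b := by
    intro b hb
    obtain ⟨t, ht, htb⟩ := hU.1.surjOn (Finset.mem_coe.mpr hb)
    exact ⟨t, ht, htb⟩
  have hWmem : ∀ b ∈ (J.image ⇑p.1)ᶜ, W b ∈ (J.image ⇑p.2)ᶜ := by
    intro b hb
    exact Finset.mem_coe.mp (Function.invFunOn_mem (hWex b hb))
  have hUW : ∀ b ∈ (J.image ⇑p.1)ᶜ, U (W b) = b := by
    intro b hb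
    exact Function.invFunOn_eq (hWex b hb)
  have hWU : ∀ t ∈ (J.image ⇑p.2)ᶜ, W (U t) = t := by
    intro t ht
    exact hU.1.injOn.leftInvOn_invFunOn (Finset.mem_coe.mpr ht)
  have hWle : ∀ b ∈ (J.image ⇑p.1)ᶜ, a (W b) ≤ a b := by
    intro b hb
    calc a (W b) ≤ a (U (W b)) := hU.2 _ (hWmem b hb)
      _ = a b := by rw [hUW b hb]
  -- the two component functions
  have hg : Function.Bijective (fun i => if i ∈ J then p.1 i else U (p.2 i)) := by
    rw [Finite.injective_iff_bijective.symm]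
    intro i i' hii
    simp only at hii
    by_cases hi : i ∈ J <;> by_cases hi' : i' ∈ J
    · rw [if_pos hi, if_pos hi'] at hii; exact p.1.injective hii
    · rw [if_pos hi, if_neg hi'] at hii
      exact absurd (hii ▸ hmS i hi) (Finset.mem_compl.mp (hU.1.mapsTo (Finset.mem_coe.mpr (hmTc i' hi'))))
    · rw [if_neg hi, if_pos hi'] at hii
      exact absurd (hii ▸ hmS i' hi') (Finset.mem_compl.mp (hU.1.mapsTo (Finset.mem_coe.mpr (hmTc i hi))))
    · rw [if_neg hi, if_neg hi'] at hii
      exact p.2.injective (hU.1.injOn (Finset.mem_coe.mpr (hmTc i hi)) (Finset.mem_coe.mpr (hmTc i' hi')) hii)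
  have hg2 : Function.Bijective (fun i => if i ∈ J then p.2 i else W (p.1 i)) := by
    rw [Finite.injective_iff_bijective.symm]
    intro i i' hii
    simp only at hii
    by_cases hi : i ∈ J <;> by_cases hi' : i' ∈ J
    · rw [if_pos hi, if_pos hi'] at hii; exact p.2.injective hii
    · rw [if_pos hi, if_neg hi'] at hii
      exact absurd (hii ▸ hmT i hi) (Finset.mem_compl.mp (hWmem _ (hmSc i' hi')))
    · rw [if_neg hi, if_pos hi'] at hii
      exact absurd (hii ▸ hmT i' hi') (Finset.mem_compl.mp (hWmem _ (hmSc i hi)))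
    · rw [if_neg hi, if_neg hi'] at hii
      have h1' : U (W (p.1 i)) = U (W (p.1 i')) := by rw [hii]
      rw [hUW _ (hmSc i hi), hUW _ (hmSc i' hi')] at h1'
      exact p.1.injective h1'
  have hc1 : ⇑(thetaP a J p).1 = fun i => if i ∈ J then p.1 i else U (p.2 i) := by
    show ⇑(mkPerm _) = _
    rw [← hUdef]
    exact mkPerm_apply hg
  have hc2 : ⇑(thetaP a J p).2 = fun i => if i ∈ J then p.2 i else W (p.1 i) := by
    show ⇑(mkPerm _) = _
    rw [← hUdef, ← hWdef]
    exact mkPerm_apply hg2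
  -- images are preserved
  have e1 : J.image ⇑(thetaP a J p).1 = J.image ⇑p.1 := by
    rw [hc1]
    apply Finset.image_congr
    intro j hj
    exact if_pos hj
  have e2 : J.image ⇑(thetaP a J p).2 = J.image ⇑p.2 := by
    rw [hc2]
    apply Finset.image_congr
    intro j hj
    exact if_pos hj
  refine ⟨?_, ?_, ?_, ?_⟩
  · intro j hj
    rw [hc1]
    simp only [if_pos hj]
    exact h1 j hj
  · intro j hj
    rw [hc2]
    simp only [if_pos hj]
    exact h2 j hj
  · apply Prod.ext
    · show mkPerm _ = p.1
      have hfun : (fun i => if i ∈ J then (thetaP a J p).1 i else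
          matchFun a (J.image ⇑(thetaP a J p).1) (J.image ⇑(thetaP a J p).2)
            ((thetaP a J p).2 i)) = ⇑p.1 := by
        funext i
        rw [e1, e2, hc1, hc2, ← hUdef]
        by_cases hi : i ∈ J
        · simp only [if_pos hi]
        · simp only [if_neg hi]
          exact hUW _ (hmSc i hi)
      rw [hfun, mkPerm_coe]
    · show mkPerm _ = p.2
      have hfun : (fun i => if i ∈ J then (thetaP a J p).2 i else
          Function.invFunOn (matchFun a (J.image ⇑(thetaP a J p).1) (J.image ⇑(thetaP a J p).2))
            ↑(J.image ⇑(thetaP a J p).2)ᶜ ((thetaP a J p).1 i)) = ⇑p.2 := by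
        funext i
        rw [e1, e2, hc1, hc2, ← hUdef, ← hWdef]
        by_cases hi : i ∈ J
        · simp only [if_pos hi]
        · simp only [if_neg hi]
          exact hWU _ (hmTc i hi)
      rw [hfun, mkPerm_coe]
  · intro i hi
    rw [hc1]
    simp only [if_neg hi]
    exact hU.2 _ (hmTc i hi)

lemma Pr_unifPerm {n : ℕ} (A : Equiv.Perm (Fin n) → Prop) :
    Pr (unifPerm n) A = ((Finset.univ.filter A).card : ℝ) * ((n.factorial : ℝ))⁻¹ := by
  rw [Pr, ← Finset.sum_filter]
  simp [unifPerm, Finset.sum_const, nsmul_eq_mul]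

lemma CExp_unifPerm {n : ℕ} (A : Equiv.Perm (Fin n) → Prop) (f : Equiv.Perm (Fin n) → ℝ) :
    CExp (unifPerm n) A f
      = (∑ σ ∈ Finset.univ.filter A, f σ) / ((Finset.univ.filter A).card : ℝ) := by
  have hfac : ((n.factorial : ℝ))⁻¹ ≠ 0 := by
    simp [Nat.factorial_ne_zero]
  rw [CExp, Pr_unifPerm, ← Finset.sum_filter]
  have : ∑ σ ∈ Finset.univ.filter A, unifPerm n σ * f σ
      = ((n.factorial : ℝ))⁻¹ * ∑ σ ∈ Finset.univ.filter A, f σ := by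
    rw [Finset.mul_sum]; rfl
  rw [this, mul_comm ((Finset.univ.filter A).card : ℝ) _, mul_div_mul_left _ _ hfac]

lemma main_ineq {n : ℕ} [Nonempty (Fin n)] (a x y : Fin n → ℝ) (I J : Finset (Fin n))
    (hIJ : Disjoint I J) (hxy : ∀ j ∈ J, x j ≤ y j)
    (φ : ({i : Fin n // i ∈ I} → ℝ) → ℝ) (hφ : Monotone φ)
    (Ex Ey : Finset (Equiv.Perm (Fin n)))
    (hEx : ∀ p, p ∈ Ex ↔ ∀ j ∈ J, a (p j) = x j)
    (hEy : ∀ p, p ∈ Ey ↔ ∀ j ∈ J, a (p j) = y j) :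
    (∑ σ ∈ Ey, φ (fun i => a (σ i.1))) * (Ex.card : ℝ)
      ≤ (∑ σ ∈ Ex, φ (fun i => a (σ i.1))) * (Ey.card : ℝ) := by
  set f : Equiv.Perm (Fin n) → ℝ := fun σ => φ (fun i => a (σ i.1)) with hf
  have hstep : ∀ p ∈ Ex ×ˢ Ey, thetaP a J p ∈ Ex ×ˢ Ey ∧
      thetaP a J (thetaP a J p) = p ∧ f p.2 ≤ f ((thetaP a J p).1) := by
    intro p hp
    rw [Finset.mem_product] at hp
    have h1 : ∀ j ∈ J, a (p.1 j) = x j := (hEx p.1).mp hp.1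
    have h2 : ∀ j ∈ J, a (p.2 j) = y j := (hEy p.2).mp hp.2
    obtain ⟨c1, c2, c3, c4⟩ := theta_core a x y J hxy p h1 h2
    refine ⟨?_, c3, ?_⟩
    · rw [Finset.mem_product]
      exact ⟨(hEx _).mpr c1, (hEy _).mpr c2⟩
    · apply hφ
      intro i
      exact c4 i.1 (Finset.disjoint_left.mp hIJ i.2)
  calc (∑ σ ∈ Ey, f σ) * (Ex.card : ℝ)
      = ∑ p ∈ Ex ×ˢ Ey, f p.2 := by
        rw [Finset.sum_product]
        simp [Finset.sum_const, nsmul_eq_mul, mul_comm, Finset.sum_mul, Finset.mul_sum]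
    _ ≤ ∑ p ∈ Ex ×ˢ Ey, f ((thetaP a J p).1) :=
        Finset.sum_le_sum (fun p hp => (hstep p hp).2.2)
    _ = ∑ p ∈ Ex ×ˢ Ey, f p.1 :=
        Finset.sum_nbij' (thetaP a J) (thetaP a J)
          (fun p hp => (hstep p hp).1) (fun p hp => (hstep p hp).1)
          (fun p hp => (hstep p hp).2.1) (fun p hp => (hstep p hp).2.1)
          (fun p hp => rfl)
    _ = (∑ σ ∈ Ex, f σ) * (Ey.card : ℝ) := by
        rw [Finset.sum_product]
        simp [Finset.sum_const, nsmul_eq_mul, mul_comm, Finset.sum_mul, Finset.mul_sum]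


/-- A random vector with the permutation distribution on any
`a ∈ ℝ^n` (`n ≥ 2`) is negatively regression dependent (NRD). -/
theorem permutation_distribution_isNRD (n : ℕ) (hn : 2 ≤ n) (a : Fin n → ℝ) :
    IsNRD (unifPerm n) (permVec a) := by
  haveI : Nonempty (Fin n) := ⟨⟨0, by omega⟩⟩
  intro I J hIJ x y hxy hPx hPy φ hφ _
  rw [CExp_unifPerm, CExp_unifPerm]
  rw [Pr_unifPerm] at hPx hPy
  have hfac : (0:ℝ) < ((n.factorial : ℝ))⁻¹ := by
    have := n.factorial_pos
    positivity
  rw [div_le_div_iff₀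
    (by rcases mul_pos_iff.mp hPy with h | h
        · exact h.1
        · linarith [hfac])
    (by rcases mul_pos_iff.mp hPx with h | h
        · exact h.1
        · linarith [hfac])]
  exact main_ineq a x y I J hIJ hxy φ hφ _ _
    (fun p => (@Finset.mem_filter _ _ (fun _ => Classical.propDecidable _) _ _).trans (by simp [permVec]))
    (fun p => (@Finset.mem_filter _ _ (fun _ => Classical.propDecidable _) _ _).trans (by simp [permVec]))
end
end
end

section
/- Let n ≥ 2 and let a = (a_1, …, a_n) be any vector of real numbers. If the random vector X has the permutation distribution on a, then X is negatively left-tail dependent (NLTD): for all disjoint subsets I, J of {1,…,n} and all vectors x_J ≤ x_J* componentwise such that both conditioning events have positive probability, [X_I | X_J ≤ x_J] ≥_st [X_I | X_J ≤ x_J*]. -/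
open scoped Classical
open Finset

noncomputable section

namespace NLTD
variable {n : ℕ}

/-- Sum of `f` over the event `A` in the permutation group. -/
def Sm (f : Equiv.Perm (Fin n) → ℝ) (A : Equiv.Perm (Fin n) → Prop) : ℝ :=
  ∑ σ : Equiv.Perm (Fin n), if A σ then f σ else 0

/-- The event given by membership constraints on `J` and pins on `F`. -/
def Ev (J F : Finset (Fin n)) (C : Fin n → Finset (Fin n)) (ρ : Fin n → Fin n)
    (σ : Equiv.Perm (Fin n)) : Prop :=
  (∀ j ∈ J, σ j ∈ C j) ∧ ∀ p ∈ F, σ p = ρ p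

lemma Sm_congr {f : Equiv.Perm (Fin n) → ℝ} {A B : Equiv.Perm (Fin n) → Prop}
    (h : ∀ σ, A σ ↔ B σ) : Sm f A = Sm f B :=
  Finset.sum_congr rfl fun σ _ => if_congr (h σ) rfl rfl

lemma Ct_nonneg (A : Equiv.Perm (Fin n) → Prop) : 0 ≤ Sm (fun _ => 1) A :=
  Finset.sum_nonneg fun σ _ => by split <;> norm_num

lemma Sm_eq_zero {f : Equiv.Perm (Fin n) → ℝ} {A : Equiv.Perm (Fin n) → Prop}
    (h : ∀ σ, ¬ A σ) : Sm f A = 0 :=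
  Finset.sum_eq_zero fun σ _ => if_neg (h σ)

lemma exists_of_Ct_pos {A : Equiv.Perm (Fin n) → Prop}
    (h : 0 < Sm (fun _ => 1) A) : ∃ σ, A σ := by
  by_contra hc
  push_neg at hc
  rw [Sm_eq_zero hc] at h
  exact lt_irrefl 0 h

lemma Ct_eq_zero_imp {A : Equiv.Perm (Fin n) → Prop}
    (h : Sm (fun _ => 1) A = 0) (f : Equiv.Perm (Fin n) → ℝ) : Sm f A = 0 := by
  refine Sm_eq_zero fun σ hσ => ?_
  have h1 : (1:ℝ) ≤ Sm (fun _ => 1) A := by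
    have := Finset.single_le_sum (f := fun σ : Equiv.Perm (Fin n) => if A σ then (1:ℝ) else 0)
      (fun τ _ => by split <;> norm_num) (Finset.mem_univ σ)
    simpa [if_pos hσ, Sm] using this
  rw [h] at h1; linarith

lemma Ct_mono {A B : Equiv.Perm (Fin n) → Prop} (h : ∀ σ, A σ → B σ) :
    Sm (fun _ => 1) A ≤ Sm (fun _ => 1) B := by
  refine Finset.sum_le_sum fun σ _ => ?_
  by_cases hA : A σ
  · rw [if_pos hA, if_pos (h σ hA)]
  · rw [if_neg hA]; split <;> norm_num

lemma Sm_split_prop (f : Equiv.Perm (Fin n) → ℝ) (A P : Equiv.Perm (Fin n) → Prop) :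
    Sm f A = Sm f (fun σ => A σ ∧ P σ) + Sm f (fun σ => A σ ∧ ¬ P σ) := by
  unfold Sm
  rw [← Finset.sum_add_distrib]
  refine Finset.sum_congr rfl fun σ _ => ?_
  by_cases hA : A σ
  · by_cases hP : P σ <;> simp [hA, hP]
  · simp [hA]

lemma Sm_split_mem (f : Equiv.Perm (Fin n) → ℝ) (A : Equiv.Perm (Fin n) → Prop)
    (g : Equiv.Perm (Fin n) → Fin n) (S : Finset (Fin n)) :
    Sm f (fun σ => A σ ∧ g σ ∈ S) = ∑ u ∈ S, Sm f (fun σ => A σ ∧ g σ = u) := by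
  unfold Sm
  rw [Finset.sum_comm]
  refine Finset.sum_congr rfl fun σ _ => ?_
  by_cases hA : A σ
  · simp only [hA, true_and]
    rw [show (∑ u ∈ S, if g σ = u then f σ else 0) = ∑ u ∈ S, if u = g σ then f σ else 0 from
      Finset.sum_congr rfl fun u _ => if_congr eq_comm rfl rfl]
    rw [Finset.sum_ite_eq' S (g σ) (fun _ => f σ)]
  · simp [hA]

lemma ratio_trans {s1 n1 s2 n2 s3 n3 : ℝ} (h12 : s2 * n1 ≤ s1 * n2)
    (h23 : s3 * n2 ≤ s2 * n3) (hn2 : 0 < n2) (hn1 : 0 ≤ n1) (hn3 : 0 ≤ n3) :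
    s3 * n1 ≤ s1 * n3 := by
  have h1 : s3 * n1 * n2 ≤ s2 * n3 * n1 := by nlinarith
  have h2 : s2 * n3 * n1 ≤ s1 * n2 * n3 := by nlinarith
  have := le_trans h1 h2
  have h3 : s3 * n1 * n2 ≤ s1 * n3 * n2 := by nlinarith
  exact le_of_mul_le_mul_right (by linarith [h3]) hn2


lemma Sm_le {f g : Equiv.Perm (Fin n) → ℝ} {A : Equiv.Perm (Fin n) → Prop}
    (h : ∀ σ, A σ → f σ ≤ g σ) : Sm f A ≤ Sm g A := by
  refine Finset.sum_le_sum fun σ _ => ?_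
  by_cases hA : A σ
  · rw [if_pos hA, if_pos hA]; exact h σ hA
  · rw [if_neg hA, if_neg hA]

lemma Sm_equiv (T : Equiv.Perm (Fin n) ≃ Equiv.Perm (Fin n)) (f g : Equiv.Perm (Fin n) → ℝ)
    (A B : Equiv.Perm (Fin n) → Prop)
    (hAB : ∀ σ, A (T σ) ↔ B σ) (hfg : ∀ σ, B σ → f (T σ) = g σ) : Sm f A = Sm g B := by
  unfold Sm
  rw [← Equiv.sum_comp T (fun σ => if A σ then f σ else 0)]
  refine Finset.sum_congr rfl fun σ _ => ?_
  show (if A (T σ) then f (T σ) else 0) = if B σ then g σ else 0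
  by_cases hB : B σ
  · rw [if_pos ((hAB σ).mpr hB), if_pos hB, hfg σ hB]
  · rw [if_neg (fun h => hB ((hAB σ).mp h)), if_neg hB]

lemma atomic (a : Fin n → ℝ) (I : Finset (Fin n)) (Φ : Equiv.Perm (Fin n) → ℝ)
    (hΦ : ∀ σ σ' : Equiv.Perm (Fin n), (∀ i ∈ I, a (σ i) ≤ a (σ' i)) → Φ σ ≤ Φ σ') :
    ∀ J : Finset (Fin n), ∀ (F : Finset (Fin n)) (C : Fin n → Finset (Fin n)) (ρ : Fin n → Fin n)
      (v w j0 : Fin n),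
      Disjoint I J → Disjoint J F → Disjoint I F →
      j0 ∉ I → j0 ∉ J → j0 ∉ F →
      (∀ j ∈ J, ∀ u u' : Fin n, a u ≤ a u' → u' ∈ C j → u ∈ C j) →
      a v ≤ a w →
      0 < Sm (fun _ => 1) (fun σ => Ev J F C ρ σ ∧ σ j0 = w) →
      0 < Sm (fun _ => 1) (fun σ => Ev J F C ρ σ ∧ σ j0 = v) →
      Sm Φ (fun σ => Ev J F C ρ σ ∧ σ j0 = w) * Sm (fun _ => 1) (fun σ => Ev J F C ρ σ ∧ σ j0 = v) ≤
      Sm Φ (fun σ => Ev J F C ρ σ ∧ σ j0 = v) * Sm (fun _ => 1) (fun σ => Ev J F C ρ σ ∧ σ j0 = w) := by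
  intro J
  induction J using Finset.strongInduction with
  | _ J IH =>
  intro F C ρ v w j0 hIJ hJF hIF hj0I hj0J hj0F hC hvw hctw hctv
  by_cases hvweq : v = w
  · subst hvweq; exact le_refl _
  set s : Equiv.Perm (Fin n) := Equiv.swap v w with hs
  set T : Equiv.Perm (Fin n) ≃ Equiv.Perm (Fin n) := Equiv.mulLeft s with hTdef
  have hTapp : ∀ (σ : Equiv.Perm (Fin n)) (x : Fin n), T σ x = s (σ x) := by
    intro σ x
    have : T σ = s * σ := rfl
    rw [this, Equiv.Perm.mul_apply]
  have hTT : ∀ σ, T (T σ) = σ := by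
    intro σ
    have h2 : T (T σ) = s * (s * σ) := rfl
    rw [h2, ← mul_assoc, Equiv.swap_mul_self, one_mul]
  have hsv : s v = w := Equiv.swap_apply_left v w
  have hsw : s w = v := Equiv.swap_apply_right v w
  obtain ⟨τv, hτv⟩ := exists_of_Ct_pos hctv
  obtain ⟨τw, hτw⟩ := exists_of_Ct_pos hctw
  have hFv : ∀ p ∈ F, ρ p ≠ v := by
    intro p hp hpv
    have h1 : τv p = v := by rw [hτv.1.2 p hp, hpv]
    have h2 : p = j0 := τv.injective (h1.trans hτv.2.symm)
    exact hj0F (h2 ▸ hp)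
  have hFw : ∀ p ∈ F, ρ p ≠ w := by
    intro p hp hpw
    have h1 : τw p = w := by rw [hτw.1.2 p hp, hpw]
    have h2 : p = j0 := τw.injective (h1.trans hτw.2.symm)
    exact hj0F (h2 ▸ hp)
  have hpins : ∀ σ : Equiv.Perm (Fin n), (∀ p ∈ F, σ p = ρ p) → ∀ p ∈ F, T σ p = ρ p := by
    intro σ hσ p hp
    rw [hTapp, hσ p hp]
    rw [Equiv.swap_apply_of_ne_of_ne (hFv p hp) (hFw p hp)]
  have mapAvAw : ∀ σ : Equiv.Perm (Fin n), Ev J F C ρ σ → σ j0 = v →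
      Ev J F C ρ (T σ) ∧ T σ j0 = w := by
    intro σ hEv hj0v
    refine ⟨⟨?_, hpins σ hEv.2⟩, by rw [hTapp, hj0v, hsv]⟩
    intro j hj
    have hjj0 : j ≠ j0 := fun h => hj0J (h ▸ hj)
    have hne_v : σ j ≠ v := fun h => hjj0 (σ.injective (h.trans hj0v.symm))
    by_cases hw' : σ j = w
    · have hTj : T σ j = v := by rw [hTapp, hw', hsw]
      rw [hTj]
      exact hC j hj v w hvw (hw' ▸ hEv.1 j hj)
    · have hTj : T σ j = σ j := by rw [hTapp, Equiv.swap_apply_of_ne_of_ne hne_v hw']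
      rw [hTj]; exact hEv.1 j hj
  have mapAwBw : ∀ σ : Equiv.Perm (Fin n), Ev J F C ρ σ → σ j0 = w →
      (σ⁻¹ v ∈ J → w ∈ C (σ⁻¹ v)) → Ev J F C ρ (T σ) ∧ T σ j0 = v := by
    intro σ hEv hj0w hgood
    refine ⟨⟨?_, hpins σ hEv.2⟩, by rw [hTapp, hj0w, hsw]⟩
    intro j hj
    have hjj0 : j ≠ j0 := fun h => hj0J (h ▸ hj)
    have hne_w : σ j ≠ w := fun h => hjj0 (σ.injective (h.trans hj0w.symm))
    by_cases hv' : σ j = v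
    · have hj_eq : σ⁻¹ v = j := by rw [← hv', Equiv.Perm.inv_def, Equiv.symm_apply_apply]
      have hjJ : σ⁻¹ v ∈ J := by rw [hj_eq]; exact hj
      have hwCj : w ∈ C j := by have := hgood hjJ; rwa [hj_eq] at this
      have hTj : T σ j = w := by rw [hTapp, hv', hsv]
      rw [hTj]; exact hwCj
    · have hTj : T σ j = σ j := by rw [hTapp, Equiv.swap_apply_of_ne_of_ne hv' hne_w]
      rw [hTj]; exact hEv.1 j hj
  have mapAwBad : ∀ σ : Equiv.Perm (Fin n), σ j0 = w → Ev J F C ρ (T σ) →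
      (σ⁻¹ v ∈ J → w ∈ C (σ⁻¹ v)) := by
    intro σ hj0w hEvT hjJ
    have h1 : T σ (σ⁻¹ v) = w := by rw [hTapp, Equiv.Perm.inv_def, Equiv.apply_symm_apply, hsv]
    have := hEvT.1 (σ⁻¹ v) hjJ
    rwa [h1] at this
  set Av : Equiv.Perm (Fin n) → Prop := fun σ => Ev J F C ρ σ ∧ σ j0 = v with hAv
  set Aw : Equiv.Perm (Fin n) → Prop := fun σ => Ev J F C ρ σ ∧ σ j0 = w with hAw
  set Bw1 : Equiv.Perm (Fin n) → Prop :=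
    fun σ => Aw σ ∧ (σ⁻¹ v ∈ J → w ∈ C (σ⁻¹ v)) with hBw1
  have key1 : ∀ σ : Equiv.Perm (Fin n), Av (T σ) ↔ Bw1 σ := by
    intro σ
    constructor
    · intro h
      have h2 := mapAvAw (T σ) h.1 h.2
      rw [hTT] at h2
      exact ⟨⟨h2.1, h2.2⟩, mapAwBad σ h2.2 h.1⟩
    · intro h
      exact mapAwBw σ h.1.1 h.1.2 h.2
  have reindex : ∀ f g : Equiv.Perm (Fin n) → ℝ, (∀ σ, Bw1 σ → f (T σ) = g σ) →
      Sm f Av = Sm g Bw1 := fun f g hfg => Sm_equiv T f g Av Bw1 key1 hfg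
  have IdCt : Sm (fun _ => (1:ℝ)) Av = Sm (fun _ => 1) Bw1 :=
    reindex (fun _ => 1) (fun _ => 1) (fun _ _ => rfl)
  have IdPhi : Sm Φ Bw1 ≤ Sm Φ Av := by
    rw [reindex Φ (fun σ => Φ (T σ)) (fun σ _ => rfl)]
    refine Sm_le fun σ hB => ?_
    refine hΦ σ (T σ) fun i hi => ?_
    obtain ⟨⟨hEv, hj0w⟩, hGood⟩ := hB
    by_cases hiv : σ i = v
    · rw [hTapp, hiv, hsv]
      exact hiv ▸ hvw
    · have hiw : σ i ≠ w := fun h => hj0I ((σ.injective (h.trans hj0w.symm)) ▸ hi)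
      rw [hTapp, Equiv.swap_apply_of_ne_of_ne hiv hiw]
  set Pbad : Finset (Fin n) := J.filter (fun p => w ∉ C p) with hPbad
  have split1 : ∀ f : Equiv.Perm (Fin n) → ℝ,
      Sm f Aw = Sm f Bw1 + ∑ p ∈ Pbad, Sm f (fun σ => Aw σ ∧ σ⁻¹ v = p) := by
    intro f
    have e1 : Sm f (fun σ => Aw σ ∧ (σ⁻¹ v ∈ J → w ∈ C (σ⁻¹ v))) = Sm f Bw1 :=
      Sm_congr fun σ => Iff.rfl
    have e2 : Sm f (fun σ => Aw σ ∧ ¬(σ⁻¹ v ∈ J → w ∈ C (σ⁻¹ v)))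
        = ∑ p ∈ Pbad, Sm f (fun σ => Aw σ ∧ σ⁻¹ v = p) := by
      refine (Sm_congr fun σ => ?_).trans (Sm_split_mem f Aw (fun σ => σ⁻¹ v) Pbad)
      rw [hPbad]
      constructor
      · intro h
        refine ⟨h.1, Finset.mem_filter.mpr ?_⟩
        have := h.2
        rw [Classical.not_imp] at this
        exact this
      · intro h
        refine ⟨h.1, ?_⟩
        have := Finset.mem_filter.mp h.2
        rw [Classical.not_imp]
        exact this
    rw [Sm_split_prop f Aw (fun σ => σ⁻¹ v ∈ J → w ∈ C (σ⁻¹ v)), e1, e2]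
  have perP : ∀ p ∈ Pbad,
      Sm Φ (fun σ => Aw σ ∧ σ⁻¹ v = p) * Sm (fun _ => 1) Av
      ≤ Sm Φ Av * Sm (fun _ => 1) (fun σ => Aw σ ∧ σ⁻¹ v = p) := by
    intro p hp
    rw [hPbad] at hp
    obtain ⟨hpJ, hpw⟩ := Finset.mem_filter.mp hp
    have hconv : ∀ σ : Equiv.Perm (Fin n),
        (Aw σ ∧ σ⁻¹ v = p) ↔ (Aw σ ∧ σ p = v) := by
      intro σ
      refine and_congr Iff.rfl ?_
      constructor
      · intro h; rw [← h, Equiv.Perm.inv_def, Equiv.apply_symm_apply]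
      · intro h; rw [← h, Equiv.Perm.inv_def, Equiv.symm_apply_apply]
    rw [Sm_congr (f := Φ) hconv, Sm_congr (f := fun _ => (1:ℝ)) hconv]
    set Awp : Equiv.Perm (Fin n) → Prop := fun σ => Aw σ ∧ σ p = v with hAwpdef
    by_cases hct0 : Sm (fun _ => (1:ℝ)) Awp = 0
    · rw [Ct_eq_zero_imp hct0 Φ, hct0, zero_mul, mul_zero]
    · have hctp : 0 < Sm (fun _ => (1:ℝ)) Awp := lt_of_le_of_ne (Ct_nonneg _) (Ne.symm hct0)
      obtain ⟨σ₀, hσ₀⟩ := exists_of_Ct_pos hctp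
      have hvCp : v ∈ C p := by have := hσ₀.1.1.1 p hpJ; rwa [hσ₀.2] at this
      have hpj0 : p ≠ j0 := fun h => hj0J (h ▸ hpJ)
      have hpF : p ∉ F := Finset.disjoint_left.mp hJF hpJ
      have hpI : p ∉ I := Finset.disjoint_right.mp hIJ hpJ
      set F' : Finset (Fin n) := insert j0 F with hF'
      set ρ' : Fin n → Fin n := Function.update ρ j0 v with hρ'
      set J' : Finset (Fin n) := J.erase p with hJ'
      set Dp : Equiv.Perm (Fin n) → Prop := fun σ => Ev J' F' C ρ' σ ∧ σ p = w with hDp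
      have hρ'j0 : ρ' j0 = v := Function.update_self j0 v ρ
      have hρ'F : ∀ q ∈ F, ρ' q = ρ q := by
        intro q hq
        have hqj0 : q ≠ j0 := fun h => hj0F (h ▸ hq)
        exact Function.update_of_ne hqj0 v ρ
      have mapAwpDp : ∀ σ, Awp σ → Dp (T σ) := by
        intro σ hσ
        obtain ⟨⟨hEv, hj0w⟩, hpv⟩ := hσ
        refine ⟨⟨?_, ?_⟩, by rw [hTapp, hpv, hsv]⟩
        · intro j hj
          have hjp : j ≠ p := Finset.ne_of_mem_erase hj
          have hjJ : j ∈ J := Finset.mem_of_mem_erase hj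
          have hjj0 : j ≠ j0 := fun h => hj0J (h ▸ hjJ)
          have h1 : σ j ≠ v := fun h => hjp (σ.injective (h.trans hpv.symm))
          have h2 : σ j ≠ w := fun h => hjj0 (σ.injective (h.trans hj0w.symm))
          rw [hTapp, Equiv.swap_apply_of_ne_of_ne h1 h2]
          exact hEv.1 j hjJ
        · intro q hq
          rcases Finset.mem_insert.mp hq with h | h
          · subst h; rw [hTapp, hj0w, hsw, hρ'j0]
          · rw [hρ'F q h]; exact hpins σ hEv.2 q h
      have mapDpAwp : ∀ τ, Dp τ → Awp (T τ) := by
        intro τ hτ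
        obtain ⟨⟨hCs, hPs⟩, hpw'⟩ := hτ
        have hτj0 : τ j0 = v := by
          have := hPs j0 (Finset.mem_insert_self j0 F)
          rwa [hρ'j0] at this
        refine ⟨⟨⟨?_, ?_⟩, by rw [hTapp, hτj0, hsv]⟩, by rw [hTapp, hpw', hsw]⟩
        · intro j hj
          by_cases hjp : j = p
          · subst hjp
            rw [hTapp, hpw', hsw]
            exact hvCp
          · have hjj0 : j ≠ j0 := fun h => hj0J (h ▸ hj)
            have h1 : τ j ≠ v := fun h => hjj0 (τ.injective (h.trans hτj0.symm))
            have h2 : τ j ≠ w := fun h => hjp (τ.injective (h.trans hpw'.symm))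
            rw [hTapp, Equiv.swap_apply_of_ne_of_ne h1 h2]
            exact hCs j (Finset.mem_erase.mpr ⟨hjp, hj⟩)
        · intro q hq
          have h0 : τ q = ρ q := by
            have := hPs q (Finset.mem_insert_of_mem hq)
            rwa [hρ'F q hq] at this
          rw [hTapp, h0, Equiv.swap_apply_of_ne_of_ne (hFv q hq) (hFw q hq)]
      have key2 : ∀ σ, Awp σ ↔ Dp (T σ) := by
        intro σ
        constructor
        · exact mapAwpDp σ
        · intro h
          have := mapDpAwp (T σ) h
          rwa [hTT] at this
      have key2' : ∀ σ, Awp (T σ) ↔ Dp σ := by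
        intro σ
        have h := key2 (T σ)
        rwa [hTT σ] at h
      have trans2 : ∀ f g : Equiv.Perm (Fin n) → ℝ, (∀ σ, Dp σ → f (T σ) = g σ) →
          Sm f Awp = Sm g Dp := fun f g hfg => Sm_equiv T f g Awp Dp key2' hfg
      have hagree : ∀ σ, Dp σ → ∀ i ∈ I, T σ i = σ i := by
        intro σ hσ i hi
        have hij0 : i ≠ j0 := fun h => hj0I (h ▸ hi)
        have hip : i ≠ p := fun h => hpI (h ▸ hi)
        have hσj0 : σ j0 = v := by
          have := hσ.1.2 j0 (Finset.mem_insert_self j0 F)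
          rwa [hρ'j0] at this
        have h1 : σ i ≠ v := fun h => hij0 (σ.injective (h.trans hσj0.symm))
        have h2 : σ i ≠ w := fun h => hip (σ.injective (h.trans hσ.2.symm))
        rw [hTapp, Equiv.swap_apply_of_ne_of_ne h1 h2]
      have transPhi : Sm Φ Awp = Sm Φ Dp :=
        trans2 Φ Φ fun σ hσ => le_antisymm
          (hΦ (T σ) σ fun i hi => le_of_eq (congrArg a (hagree σ hσ i hi)))
          (hΦ σ (T σ) fun i hi => le_of_eq (congrArg a (hagree σ hσ i hi)).symm)
      have transCt : Sm (fun _ => (1:ℝ)) Awp = Sm (fun _ => 1) Dp :=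
        trans2 (fun _ => 1) (fun _ => 1) fun _ _ => rfl
      have key3 : ∀ σ : Equiv.Perm (Fin n),
          Av σ ↔ (Ev J' F' C ρ' σ ∧ σ p ∈ C p) := by
        intro σ
        constructor
        · rintro ⟨⟨hCs, hPs⟩, hj0v⟩
          refine ⟨⟨fun j hj => hCs j (Finset.mem_of_mem_erase hj), ?_⟩, hCs p hpJ⟩
          intro q hq
          rcases Finset.mem_insert.mp hq with h | h
          · subst h; rw [hj0v, hρ'j0]
          · rw [hρ'F q h]; exact hPs q h
        · rintro ⟨⟨hCs, hPs⟩, hpC⟩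
          have hσj0 : σ j0 = v := by
            have := hPs j0 (Finset.mem_insert_self j0 F)
            rwa [hρ'j0] at this
          refine ⟨⟨?_, ?_⟩, hσj0⟩
          · intro j hj
            by_cases hjp : j = p
            · subst hjp; exact hpC
            · exact hCs j (Finset.mem_erase.mpr ⟨hjp, hj⟩)
          · intro q hq
            have := hPs q (Finset.mem_insert_of_mem hq)
            rwa [hρ'F q hq] at this
      have decompAv : ∀ f : Equiv.Perm (Fin n) → ℝ,
          Sm f Av = ∑ u ∈ C p, Sm f (fun σ => Ev J' F' C ρ' σ ∧ σ p = u) := by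
        intro f
        exact (Sm_congr key3).trans (Sm_split_mem f (Ev J' F' C ρ') (fun σ => σ p) (C p))
      have hauw : ∀ u ∈ C p, a u ≤ a w := by
        intro u hu
        by_contra hlt
        exact hpw (hC p hpJ w u (le_of_not_ge hlt) hu)
      have hDppos : 0 < Sm (fun _ => (1:ℝ)) Dp := transCt ▸ hctp
      have hstep : ∀ u ∈ C p,
          Sm Φ Dp * Sm (fun _ => 1) (fun σ => Ev J' F' C ρ' σ ∧ σ p = u)
          ≤ Sm Φ (fun σ => Ev J' F' C ρ' σ ∧ σ p = u) * Sm (fun _ => 1) Dp := by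
        intro u hu
        by_cases hz : Sm (fun _ => (1:ℝ)) (fun σ => Ev J' F' C ρ' σ ∧ σ p = u) = 0
        · rw [hz, Ct_eq_zero_imp hz Φ, mul_zero, zero_mul]
        · have hupos : 0 < Sm (fun _ => (1:ℝ)) (fun σ => Ev J' F' C ρ' σ ∧ σ p = u) :=
            lt_of_le_of_ne (Ct_nonneg _) (Ne.symm hz)
          exact IH J' (Finset.erase_ssubset hpJ) F' C ρ' u w p
            (Finset.disjoint_of_subset_right (Finset.erase_subset p J) hIJ)
            (Finset.disjoint_insert_right.mpr
              ⟨fun h => hj0J (Finset.mem_of_mem_erase h),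
               Finset.disjoint_of_subset_left (Finset.erase_subset p J) hJF⟩)
            (Finset.disjoint_insert_right.mpr ⟨hj0I, hIF⟩)
            hpI (Finset.notMem_erase p J)
            (fun h => (Finset.mem_insert.mp h).elim hpj0 hpF)
            (fun j hj => hC j (Finset.mem_of_mem_erase hj))
            (hauw u hu) hDppos hupos
      rw [transPhi, transCt, decompAv Φ, decompAv (fun _ => 1), Finset.mul_sum, Finset.sum_mul]
      exact Finset.sum_le_sum hstep
  rw [split1 Φ, split1 (fun _ => 1), add_mul, mul_add, Finset.sum_mul, Finset.mul_sum]
  refine add_le_add ?_ (Finset.sum_le_sum perP)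
  rw [← IdCt]
  exact mul_le_mul_of_nonneg_right IdPhi (Ct_nonneg _)

lemma level1 (a : Fin n → ℝ) (I : Finset (Fin n)) (Φ : Equiv.Perm (Fin n) → ℝ)
    (hΦ : ∀ σ σ' : Equiv.Perm (Fin n), (∀ i ∈ I, a (σ i) ≤ a (σ' i)) → Φ σ ≤ Φ σ')
    (J F : Finset (Fin n)) (C : Fin n → Finset (Fin n)) (ρ : Fin n → Fin n)
    (j0 : Fin n) (D : Finset (Fin n)) (v0 : Fin n)
    (hIJ : Disjoint I J) (hJF : Disjoint J F) (hIF : Disjoint I F)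
    (hj0I : j0 ∉ I) (hj0J : j0 ∉ J) (hj0F : j0 ∉ F)
    (hC : ∀ j ∈ J, ∀ u u' : Fin n, a u ≤ a u' → u' ∈ C j → u ∈ C j)
    (hv0D : v0 ∉ D) (hdom : ∀ u ∈ D, a u ≤ a v0)
    (hpos : 0 < Sm (fun _ => 1) (fun σ => Ev J F C ρ σ ∧ σ j0 ∈ D)) :
    Sm Φ (fun σ => Ev J F C ρ σ ∧ σ j0 ∈ insert v0 D)
      * Sm (fun _ => 1) (fun σ => Ev J F C ρ σ ∧ σ j0 ∈ D)
    ≤ Sm Φ (fun σ => Ev J F C ρ σ ∧ σ j0 ∈ D)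
      * Sm (fun _ => 1) (fun σ => Ev J F C ρ σ ∧ σ j0 ∈ insert v0 D) := by
  have hsplitD : ∀ f : Equiv.Perm (Fin n) → ℝ,
      Sm f (fun σ => Ev J F C ρ σ ∧ σ j0 ∈ D)
        = ∑ u ∈ D, Sm f (fun σ => Ev J F C ρ σ ∧ σ j0 = u) :=
    fun f => Sm_split_mem f (Ev J F C ρ) (fun σ => σ j0) D
  have hsplitI : ∀ f : Equiv.Perm (Fin n) → ℝ,
      Sm f (fun σ => Ev J F C ρ σ ∧ σ j0 ∈ insert v0 D)
        = Sm f (fun σ => Ev J F C ρ σ ∧ σ j0 = v0)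
          + ∑ u ∈ D, Sm f (fun σ => Ev J F C ρ σ ∧ σ j0 = u) := by
    intro f
    rw [Sm_split_mem f (Ev J F C ρ) (fun σ => σ j0) (insert v0 D),
      Finset.sum_insert hv0D]
  by_cases hn' : Sm (fun _ => (1:ℝ)) (fun σ => Ev J F C ρ σ ∧ σ j0 = v0) = 0
  · have e1 : Sm Φ (fun σ => Ev J F C ρ σ ∧ σ j0 ∈ insert v0 D)
        = Sm Φ (fun σ => Ev J F C ρ σ ∧ σ j0 ∈ D) := by
      rw [hsplitI Φ, hsplitD Φ, Ct_eq_zero_imp hn' Φ, zero_add]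
    have e2 : Sm (fun _ => (1:ℝ)) (fun σ => Ev J F C ρ σ ∧ σ j0 ∈ insert v0 D)
        = Sm (fun _ => 1) (fun σ => Ev J F C ρ σ ∧ σ j0 ∈ D) := by
      rw [hsplitI (fun _ => 1), hsplitD (fun _ => 1), hn', zero_add]
    rw [e1, e2, mul_comm]
  · have hv0pos : 0 < Sm (fun _ => (1:ℝ)) (fun σ => Ev J F C ρ σ ∧ σ j0 = v0) :=
      lt_of_le_of_ne (Ct_nonneg _) (Ne.symm hn')
    have hkey : Sm Φ (fun σ => Ev J F C ρ σ ∧ σ j0 = v0)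
        * Sm (fun _ => 1) (fun σ => Ev J F C ρ σ ∧ σ j0 ∈ D)
      ≤ Sm Φ (fun σ => Ev J F C ρ σ ∧ σ j0 ∈ D)
        * Sm (fun _ => 1) (fun σ => Ev J F C ρ σ ∧ σ j0 = v0) := by
      rw [hsplitD Φ, hsplitD (fun _ => 1), Finset.mul_sum, Finset.sum_mul]
      refine Finset.sum_le_sum fun u hu => ?_
      by_cases hnu : Sm (fun _ => (1:ℝ)) (fun σ => Ev J F C ρ σ ∧ σ j0 = u) = 0
      · rw [hnu, Ct_eq_zero_imp hnu Φ, mul_zero, zero_mul]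
      · have hupos : 0 < Sm (fun _ => (1:ℝ)) (fun σ => Ev J F C ρ σ ∧ σ j0 = u) :=
          lt_of_le_of_ne (Ct_nonneg _) (Ne.symm hnu)
        exact atomic a I Φ hΦ J F C ρ u v0 j0 hIJ hJF hIF hj0I hj0J hj0F hC
          (hdom u hu) hv0pos hupos
    rw [hsplitI Φ, hsplitI (fun _ => 1), ← hsplitD Φ, ← hsplitD (fun _ => 1),
      add_mul, mul_add]
    exact add_le_add hkey (le_refl _)
  -- note: last line adds Sm Φ (∈D) * Sm 1 (∈D) to both sides

lemma level15 (a : Fin n → ℝ) (I : Finset (Fin n)) (Φ : Equiv.Perm (Fin n) → ℝ)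
    (hΦ : ∀ σ σ' : Equiv.Perm (Fin n), (∀ i ∈ I, a (σ i) ≤ a (σ' i)) → Φ σ ≤ Φ σ')
    (J F : Finset (Fin n)) (C : Fin n → Finset (Fin n)) (ρ : Fin n → Fin n)
    (j0 : Fin n)
    (hIJ : Disjoint I J) (hJF : Disjoint J F) (hIF : Disjoint I F)
    (hj0I : j0 ∉ I) (hj0J : j0 ∉ J) (hj0F : j0 ∉ F)
    (hC : ∀ j ∈ J, ∀ u u' : Fin n, a u ≤ a u' → u' ∈ C j → u ∈ C j) :
    ∀ (k : ℕ) (D D' : Finset (Fin n)), (D' \ D).card = k → D ⊆ D' →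
    (∀ u ∈ D, ∀ z ∈ D', z ∉ D → a u ≤ a z) →
    0 < Sm (fun _ => 1) (fun σ => Ev J F C ρ σ ∧ σ j0 ∈ D) →
    Sm Φ (fun σ => Ev J F C ρ σ ∧ σ j0 ∈ D')
      * Sm (fun _ => 1) (fun σ => Ev J F C ρ σ ∧ σ j0 ∈ D)
    ≤ Sm Φ (fun σ => Ev J F C ρ σ ∧ σ j0 ∈ D)
      * Sm (fun _ => 1) (fun σ => Ev J F C ρ σ ∧ σ j0 ∈ D') := by
  intro k
  induction k using Nat.strong_induction_on with
  | _ k IHk =>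
  intro D D' hcard hsub hdom hpos
  rcases Nat.eq_zero_or_pos k with hk0 | hk0
  · have hempty : D' \ D = ∅ := Finset.card_eq_zero.mp (hk0 ▸ hcard)
    have hDD : D' = D :=
      Finset.Subset.antisymm (Finset.sdiff_eq_empty_iff_subset.mp hempty) hsub
    rw [hDD, mul_comm]
  · have hne : (D' \ D).Nonempty := Finset.card_pos.mp (by rw [hcard]; exact hk0)
    obtain ⟨v0, hv0mem, hv0min⟩ := Finset.exists_min_image (D' \ D) a hne
    have hv0D' : v0 ∈ D' := (Finset.mem_sdiff.mp hv0mem).1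
    have hv0D : v0 ∉ D := (Finset.mem_sdiff.mp hv0mem).2
    have step1 := level1 a I Φ hΦ J F C ρ j0 D v0 hIJ hJF hIF hj0I hj0J hj0F hC hv0D
      (fun u hu => hdom u hu v0 hv0D' hv0D) hpos
    have hpos1 : 0 < Sm (fun _ => (1:ℝ)) (fun σ => Ev J F C ρ σ ∧ σ j0 ∈ insert v0 D) :=
      lt_of_lt_of_le hpos (Ct_mono fun σ hσ => ⟨hσ.1, Finset.mem_insert_of_mem hσ.2⟩)
    have hsub1 : insert v0 D ⊆ D' := Finset.insert_subset hv0D' hsub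
    have hlt : (D' \ insert v0 D).card < k := by
      rw [Finset.sdiff_insert, Finset.card_erase_of_mem hv0mem, hcard]
      exact Nat.sub_lt hk0 one_pos
    have hdom1 : ∀ u ∈ insert v0 D, ∀ z ∈ D', z ∉ insert v0 D → a u ≤ a z := by
      intro u hu z hz hzn
      rcases Finset.mem_insert.mp hu with h | h
      · subst h
        exact hv0min z (Finset.mem_sdiff.mpr ⟨hz, fun hzD => hzn (Finset.mem_insert_of_mem hzD)⟩)
      · exact hdom u h z hz (fun hzD => hzn (Finset.mem_insert_of_mem hzD))
    have step2 := IHk _ hlt (insert v0 D) D' rfl hsub1 hdom1 hpos1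
    exact ratio_trans step1 step2 hpos1 (Ct_nonneg _) (Ct_nonneg _)

lemma level2 (a : Fin n → ℝ) (I : Finset (Fin n)) (Φ : Equiv.Perm (Fin n) → ℝ)
    (hΦ : ∀ σ σ' : Equiv.Perm (Fin n), (∀ i ∈ I, a (σ i) ≤ a (σ' i)) → Φ σ ≤ Φ σ')
    (J : Finset (Fin n)) (C C' : Fin n → Finset (Fin n))
    (hsub : ∀ j ∈ J, C j ⊆ C' j)
    (hC : ∀ j ∈ J, ∀ u u' : Fin n, a u ≤ a u' → u' ∈ C j → u ∈ C j)
    (hC' : ∀ j ∈ J, ∀ u u' : Fin n, a u ≤ a u' → u' ∈ C' j → u ∈ C' j)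
    (hIJ : Disjoint I J)
    (hpos : 0 < Sm (fun _ => 1) (fun σ => ∀ j ∈ J, σ j ∈ C j)) :
    ∀ S : Finset (Fin n), S ⊆ J →
    Sm Φ (fun σ => ∀ j ∈ J, σ j ∈ (if j ∈ S then C' j else C j))
      * Sm (fun _ => 1) (fun σ => ∀ j ∈ J, σ j ∈ C j)
    ≤ Sm Φ (fun σ => ∀ j ∈ J, σ j ∈ C j)
      * Sm (fun _ => 1) (fun σ => ∀ j ∈ J, σ j ∈ (if j ∈ S then C' j else C j)) := by
  intro S
  induction S using Finset.induction_on with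
  | empty =>
    intro _
    have e : ∀ f : Equiv.Perm (Fin n) → ℝ,
        Sm f (fun σ => ∀ j ∈ J, σ j ∈ (if j ∈ (∅ : Finset (Fin n)) then C' j else C j))
          = Sm f (fun σ => ∀ j ∈ J, σ j ∈ C j) := by
      intro f
      refine Sm_congr fun σ => ?_
      constructor
      · intro h j hj; have := h j hj; simpa using this
      · intro h j hj; simpa using h j hj
    rw [e Φ, e (fun _ => 1), mul_comm]
  | @insert j0 S hj0S IH =>
    intro hins
    have hj0J : j0 ∈ J := hins (Finset.mem_insert_self j0 S)
    have hSJ : S ⊆ J := fun z hz => hins (Finset.mem_insert_of_mem hz)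
    set CS : Fin n → Finset (Fin n) := fun j => if j ∈ S then C' j else C j with hCS
    -- events
    have hj0nJ' : j0 ∉ J.erase j0 := Finset.notMem_erase j0 J
    have hj0nI : j0 ∉ I := Finset.disjoint_right.mp hIJ hj0J
    have hCSj0 : CS j0 = C j0 := by simp only [hCS]; rw [if_neg hj0S]
    have E2 : ∀ σ : Equiv.Perm (Fin n),
        (∀ j ∈ J, σ j ∈ CS j) ↔
        (Ev (J.erase j0) (∅ : Finset (Fin n)) CS id σ ∧ σ j0 ∈ C j0) := by
      intro σ
      constructor
      · intro h
        refine ⟨⟨fun j hj => h j (Finset.mem_of_mem_erase hj), fun p hp => absurd hp (Finset.notMem_empty p)⟩, ?_⟩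
        have := h j0 hj0J
        rwa [hCSj0] at this
      · rintro ⟨⟨h1, _⟩, h2⟩
        intro j hj
        by_cases hjj0 : j = j0
        · subst hjj0; rwa [hCSj0]
        · exact h1 j (Finset.mem_erase.mpr ⟨hjj0, hj⟩)
    have E1 : ∀ σ : Equiv.Perm (Fin n),
        (∀ j ∈ J, σ j ∈ (if j ∈ insert j0 S then C' j else C j)) ↔
        (Ev (J.erase j0) (∅ : Finset (Fin n)) CS id σ ∧ σ j0 ∈ C' j0) := by
      intro σ
      have hmix : ∀ j, j ≠ j0 → (if j ∈ insert j0 S then C' j else C j) = CS j := by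
        intro j hjj0
        simp only [hCS]
        by_cases hjS : j ∈ S
        · rw [if_pos (Finset.mem_insert_of_mem hjS), if_pos hjS]
        · rw [if_neg (fun h => (Finset.mem_insert.mp h).elim hjj0 hjS), if_neg hjS]
      constructor
      · intro h
        refine ⟨⟨fun j hj => ?_, fun p hp => absurd hp (Finset.notMem_empty p)⟩, ?_⟩
        · have := h j (Finset.mem_of_mem_erase hj)
          rwa [hmix j (Finset.ne_of_mem_erase hj)] at this
        · have := h j0 hj0J
          rwa [if_pos (Finset.mem_insert_self j0 S)] at this
      · rintro ⟨⟨h1, _⟩, h2⟩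
        intro j hj
        by_cases hjj0 : j = j0
        · subst hjj0; rwa [if_pos (Finset.mem_insert_self _ S)]
        · rw [hmix j hjj0]
          exact h1 j (Finset.mem_erase.mpr ⟨hjj0, hj⟩)
    have hposCS : 0 < Sm (fun _ => (1:ℝ)) (fun σ => ∀ j ∈ J, σ j ∈ CS j) := by
      refine lt_of_lt_of_le hpos (Ct_mono fun σ hσ j hj => ?_)
      simp only [hCS]
      by_cases hjS : j ∈ S
      · rw [if_pos hjS]; exact hsub j hj (hσ j hj)
      · rw [if_neg hjS]; exact hσ j hj
    have hCSdown : ∀ j ∈ J.erase j0, ∀ u u' : Fin n, a u ≤ a u' → u' ∈ CS j → u ∈ CS j := by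
      intro j hj u u' huu h
      have hjJ : j ∈ J := Finset.mem_of_mem_erase hj
      simp only [hCS] at h ⊢
      by_cases hjS : j ∈ S
      · rw [if_pos hjS] at h ⊢; exact hC' j hjJ u u' huu h
      · rw [if_neg hjS] at h ⊢; exact hC j hjJ u u' huu h
    have hdomx : ∀ u ∈ C j0, ∀ z ∈ C' j0, z ∉ C j0 → a u ≤ a z := by
      intro u hu z hz hzn
      by_contra hlt
      exact hzn (hC j0 hj0J z u (le_of_not_ge hlt) hu)
    have hposE : 0 < Sm (fun _ => (1:ℝ))
        (fun σ => Ev (J.erase j0) (∅ : Finset (Fin n)) CS id σ ∧ σ j0 ∈ C j0) := by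
      rw [← Sm_congr (f := fun _ => (1:ℝ)) E2]
      exact hposCS
    have step := level15 a I Φ hΦ (J.erase j0) ∅ CS id j0
      (Finset.disjoint_of_subset_right (Finset.erase_subset j0 J) hIJ)
      (Finset.disjoint_empty_right _) (Finset.disjoint_empty_right _)
      hj0nI hj0nJ' (Finset.notMem_empty j0) hCSdown
      ((C' j0) \ (C j0)).card (C j0) (C' j0) rfl (hsub j0 hj0J) hdomx hposE
    have eS1 : ∀ f : Equiv.Perm (Fin n) → ℝ,
        Sm f (fun σ => ∀ j ∈ J, σ j ∈ (if j ∈ insert j0 S then C' j else C j))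
        = Sm f (fun σ => Ev (J.erase j0) (∅ : Finset (Fin n)) CS id σ ∧ σ j0 ∈ C' j0) :=
      fun f => Sm_congr E1
    have eS2 : ∀ f : Equiv.Perm (Fin n) → ℝ,
        Sm f (fun σ => ∀ j ∈ J, σ j ∈ CS j)
        = Sm f (fun σ => Ev (J.erase j0) (∅ : Finset (Fin n)) CS id σ ∧ σ j0 ∈ C j0) :=
      fun f => Sm_congr E2
    have step' : Sm Φ (fun σ => ∀ j ∈ J, σ j ∈ (if j ∈ insert j0 S then C' j else C j))
        * Sm (fun _ => 1) (fun σ => ∀ j ∈ J, σ j ∈ CS j)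
      ≤ Sm Φ (fun σ => ∀ j ∈ J, σ j ∈ CS j)
        * Sm (fun _ => 1) (fun σ => ∀ j ∈ J, σ j ∈ (if j ∈ insert j0 S then C' j else C j)) := by
      rw [eS1 Φ, eS1 (fun _ => 1), eS2 Φ, eS2 (fun _ => 1)]
      exact step
    exact ratio_trans (IH hSJ) step' hposCS (Ct_nonneg _) (Ct_nonneg _)

end NLTD

/-- A random vector with the permutation distribution on any
`a ∈ ℝ^n` (`n ≥ 2`) is negatively left-tail dependent (NLTD). -/
theorem permutation_distribution_isNLTD (n : ℕ) (hn : 2 ≤ n) (a : Fin n → ℝ) :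
    IsNLTD (unifPerm n) (permVec a) := by
  intro I J hIJ x y hxy hx hy φ hφ _
  have hfac : (0:ℝ) < (Nat.factorial n : ℝ)⁻¹ := by positivity
  have hPr : ∀ A : Equiv.Perm (Fin n) → Prop,
      Pr (unifPerm n) A = (Nat.factorial n : ℝ)⁻¹ * NLTD.Sm (fun _ => 1) A := by
    intro A
    unfold Pr NLTD.Sm unifPerm
    rw [Finset.mul_sum]
    refine Finset.sum_congr rfl fun σ _ => ?_
    by_cases h : A σ
    · rw [if_pos h, if_pos h, mul_one]
    · rw [if_neg h, if_neg h, mul_zero]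
  have hCE : ∀ (A : Equiv.Perm (Fin n) → Prop) (f : Equiv.Perm (Fin n) → ℝ),
      CExp (unifPerm n) A f = NLTD.Sm f A / NLTD.Sm (fun _ => 1) A := by
    intro A f
    unfold CExp
    rw [hPr]
    have hnum : (∑ ω : Equiv.Perm (Fin n), if A ω then unifPerm n ω * f ω else 0)
        = (Nat.factorial n : ℝ)⁻¹ * NLTD.Sm f A := by
      unfold NLTD.Sm unifPerm
      rw [Finset.mul_sum]
      refine Finset.sum_congr rfl fun σ _ => ?_
      by_cases h : A σ
      · rw [if_pos h, if_pos h]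
      · rw [if_neg h, if_neg h, mul_zero]
    rw [hnum, mul_div_mul_left _ _ (ne_of_gt hfac)]
  rw [hPr] at hx hy
  have hx' : 0 < NLTD.Sm (fun _ => (1:ℝ)) (fun σ => ∀ j ∈ J, permVec a σ j ≤ x j) := by
    nlinarith [NLTD.Ct_nonneg (fun σ : Equiv.Perm (Fin n) => ∀ j ∈ J, permVec a σ j ≤ x j)]
  have hy' : 0 < NLTD.Sm (fun _ => (1:ℝ)) (fun σ => ∀ j ∈ J, permVec a σ j ≤ y j) := by
    nlinarith [NLTD.Ct_nonneg (fun σ : Equiv.Perm (Fin n) => ∀ j ∈ J, permVec a σ j ≤ y j)]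
  rw [hCE, hCE, div_le_div_iff₀ hy' hx']
  -- set up the combinatorial statement
  set Cx : Fin n → Finset (Fin n) := fun j => Finset.univ.filter (fun u => a u ≤ x j) with hCx
  set Cy : Fin n → Finset (Fin n) := fun j => Finset.univ.filter (fun u => a u ≤ y j) with hCy
  have hEx : ∀ σ : Equiv.Perm (Fin n),
      (∀ j ∈ J, permVec a σ j ≤ x j) ↔ (∀ j ∈ J, σ j ∈ Cx j) := by
    intro σ
    constructor
    · intro h j hj
      simp only [hCx]
      exact Finset.mem_filter.mpr ⟨Finset.mem_univ _, h j hj⟩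
    · intro h j hj
      have := h j hj
      simp only [hCx] at this
      exact (Finset.mem_filter.mp this).2
  have hEy : ∀ σ : Equiv.Perm (Fin n),
      (∀ j ∈ J, permVec a σ j ≤ y j) ↔ (∀ j ∈ J, σ j ∈ Cy j) := by
    intro σ
    constructor
    · intro h j hj
      simp only [hCy]
      exact Finset.mem_filter.mpr ⟨Finset.mem_univ _, h j hj⟩
    · intro h j hj
      have := h j hj
      simp only [hCy] at this
      exact (Finset.mem_filter.mp this).2
  have hΦ : ∀ σ σ' : Equiv.Perm (Fin n), (∀ i ∈ I, a (σ i) ≤ a (σ' i)) →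
      (φ fun i : {i : Fin n // i ∈ I} => permVec a σ i.1)
        ≤ (φ fun i : {i : Fin n // i ∈ I} => permVec a σ' i.1) := by
    intro σ σ' h
    exact hφ (by intro i; exact h i.1 i.2)
  have hsub : ∀ j ∈ J, Cx j ⊆ Cy j := by
    intro j hj u hu
    simp only [hCx] at hu
    simp only [hCy]
    exact Finset.mem_filter.mpr ⟨Finset.mem_univ _,
      le_trans (Finset.mem_filter.mp hu).2 (hxy j hj)⟩
  have hCxd : ∀ j ∈ J, ∀ u u' : Fin n, a u ≤ a u' → u' ∈ Cx j → u ∈ Cx j := by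
    intro j hj u u' huu h
    simp only [hCx] at h ⊢
    exact Finset.mem_filter.mpr ⟨Finset.mem_univ _, le_trans huu (Finset.mem_filter.mp h).2⟩
  have hCyd : ∀ j ∈ J, ∀ u u' : Fin n, a u ≤ a u' → u' ∈ Cy j → u ∈ Cy j := by
    intro j hj u u' huu h
    simp only [hCy] at h ⊢
    exact Finset.mem_filter.mpr ⟨Finset.mem_univ _, le_trans huu (Finset.mem_filter.mp h).2⟩
  set Φ : Equiv.Perm (Fin n) → ℝ :=
    fun σ => φ fun i : {i : Fin n // i ∈ I} => permVec a σ i.1 with hΦdef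
  have hx'' : 0 < NLTD.Sm (fun _ => (1:ℝ)) (fun σ => ∀ j ∈ J, σ j ∈ Cx j) := by
    rw [NLTD.Sm_congr (f := fun _ => (1:ℝ)) hEx] at hx'
    exact hx'
  have main := NLTD.level2 a I Φ hΦ J Cx Cy hsub hCxd hCyd hIJ hx'' J (le_refl _)
  have hmix : ∀ σ : Equiv.Perm (Fin n),
      (∀ j ∈ J, σ j ∈ (if j ∈ J then Cy j else Cx j)) ↔ (∀ j ∈ J, σ j ∈ Cy j) := by
    intro σ
    constructor
    · intro h j hj
      have := h j hj
      rwa [if_pos hj] at this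
    · intro h j hj
      rw [if_pos hj]
      exact h j hj
  rw [NLTD.Sm_congr (f := Φ) hmix, NLTD.Sm_congr (f := fun _ => (1:ℝ)) hmix] at main
  rw [NLTD.Sm_congr (f := Φ) hEy, NLTD.Sm_congr (f := fun _ => (1:ℝ)) hEy,
    NLTD.Sm_congr (f := Φ) hEx, NLTD.Sm_congr (f := fun _ => (1:ℝ)) hEx]
  exact main
end
end

section
/- Let n ≥ 2 and let a = (a_1, …, a_n) be any vector of real numbers. If the random vector X has the permutation distribution on a, then X is negatively right-tail dependent (NRTD): for all disjoint subsets I, J of {1,…,n} and all vectors x_J ≤ x_J* componentwise such that both conditioning events have positive probability, [X_I | X_J > x_J] ≥_st [X_I | X_J > x_J*]. -/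
open scoped Classical
open Finset

noncomputable section

namespace NRTD

variable {n : ℕ}

/-- The permutation-sum gadget: sum of `F` over all permutations satisfying
membership constraints `E` and pin constraints `Ps`. -/
def Cond (E : List (Fin n × Finset (Fin n))) (Ps : List (Fin n × Fin n))
    (σ : Equiv.Perm (Fin n)) : Prop :=
  (∀ pc ∈ E, σ pc.1 ∈ pc.2) ∧ (∀ pv ∈ Ps, σ pv.1 = pv.2)

def WP (E : List (Fin n × Finset (Fin n))) (Ps : List (Fin n × Fin n))
    (F : Equiv.Perm (Fin n) → ℝ) : ℝ :=
  ∑ σ : Equiv.Perm (Fin n), if Cond E Ps σ then F σ else 0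

lemma WP_nonneg {E Ps} {F : Equiv.Perm (Fin n) → ℝ} (hF : ∀ σ, 0 ≤ F σ) :
    0 ≤ WP E Ps F := by
  refine Finset.sum_nonneg fun σ _ => ?_
  split <;> simp [hF]

lemma WP_one_nonneg (E : List (Fin n × Finset (Fin n))) (Ps : List (Fin n × Fin n)) :
    0 ≤ WP E Ps (fun _ => (1:ℝ)) := WP_nonneg (fun _ => zero_le_one)

lemma WP_congr {E E' Ps Ps'} {F : Equiv.Perm (Fin n) → ℝ}
    (h : ∀ σ, Cond E Ps σ ↔ Cond E' Ps' σ) : WP E Ps F = WP E' Ps' F := by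
  unfold WP
  refine Finset.sum_congr rfl fun σ _ => ?_
  by_cases hc : Cond E Ps σ
  · rw [if_pos hc, if_pos ((h σ).1 hc)]
  · rw [if_neg hc, if_neg (fun hc' => hc ((h σ).2 hc'))]

lemma WP_mono_F {E Ps} {F₁ F₂ : Equiv.Perm (Fin n) → ℝ}
    (h : ∀ σ, Cond E Ps σ → F₁ σ ≤ F₂ σ) : WP E Ps F₁ ≤ WP E Ps F₂ := by
  refine Finset.sum_le_sum fun σ _ => ?_
  by_cases hc : Cond E Ps σ
  · rw [if_pos hc, if_pos hc]; exact h σ hc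
  · rw [if_neg hc, if_neg hc]

lemma WP_one_mono {E E' Ps} (h : ∀ σ : Equiv.Perm (Fin n), Cond E Ps σ → Cond E' Ps σ) :
    WP E Ps (fun _ => (1:ℝ)) ≤ WP E' Ps (fun _ => (1:ℝ)) := by
  refine Finset.sum_le_sum fun σ _ => ?_
  by_cases hc : Cond E Ps σ
  · rw [if_pos hc, if_pos (h σ hc)]
  · rw [if_neg hc]; split <;> norm_num

lemma WP_eq_zero {E Ps} {F : Equiv.Perm (Fin n) → ℝ}
    (h : WP E Ps (fun _ => (1:ℝ)) = 0) : WP E Ps F = 0 := by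
  have hall : ∀ σ : Equiv.Perm (Fin n), ¬ Cond E Ps σ := by
    intro σ hc
    have h0 : ∀ τ ∈ (Finset.univ : Finset (Equiv.Perm (Fin n))),
        (0:ℝ) ≤ if Cond E Ps τ then (1:ℝ) else 0 := by
      intro τ _; split <;> norm_num
    have := (Finset.sum_eq_zero_iff_of_nonneg h0).1 h σ (Finset.mem_univ σ)
    rw [if_pos hc] at this; norm_num at this
  unfold WP
  refine Finset.sum_eq_zero fun σ _ => if_neg (hall σ)

lemma WP_decompose (p : Fin n) (C : Finset (Fin n)) (E : List (Fin n × Finset (Fin n)))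
    (Ps : List (Fin n × Fin n)) (F : Equiv.Perm (Fin n) → ℝ) :
    WP ((p, C) :: E) Ps F = ∑ k ∈ C, WP E ((p, k) :: Ps) F := by
  unfold WP
  rw [Finset.sum_comm]
  refine Finset.sum_congr rfl fun σ _ => ?_
  have hc1 : Cond ((p, C) :: E) Ps σ ↔ (σ p ∈ C ∧ Cond E Ps σ) := by
    simp only [Cond, List.mem_cons, forall_eq_or_imp]
    tauto
  have hc2 : ∀ k, Cond E ((p, k) :: Ps) σ ↔ (σ p = k ∧ Cond E Ps σ) := by
    intro k
    simp only [Cond, List.mem_cons, forall_eq_or_imp]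
    tauto
  by_cases hr : Cond E Ps σ
  · by_cases hp : σ p ∈ C
    · rw [if_pos (hc1.2 ⟨hp, hr⟩)]
      have : ∀ k ∈ C, (if Cond E ((p, k) :: Ps) σ then F σ else 0)
          = if σ p = k then F σ else 0 := by
        intro k _
        by_cases he : σ p = k
        · rw [if_pos ((hc2 k).2 ⟨he, hr⟩), if_pos he]
        · rw [if_neg (fun hh => he ((hc2 k).1 hh).1), if_neg he]
      rw [Finset.sum_congr rfl this, Finset.sum_ite_eq C (σ p) (fun _ => F σ), if_pos hp]
    · rw [if_neg (fun hh => hp (hc1.1 hh).1)]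
      refine (Finset.sum_eq_zero fun k hk => ?_).symm
      refine if_neg (fun hh => ?_)
      exact hp (((hc2 k).1 hh).1 ▸ hk)
  · rw [if_neg (fun hh => hr (hc1.1 hh).2)]
    refine (Finset.sum_eq_zero fun k _ => ?_).symm
    exact if_neg (fun hh => hr ((hc2 k).1 hh).2)

lemma WP_perm {E E' : List (Fin n × Finset (Fin n))} {Ps} {F : Equiv.Perm (Fin n) → ℝ}
    (h : E.Perm E') : WP E Ps F = WP E' Ps F := by
  refine WP_congr fun σ => ?_
  unfold Cond
  constructor <;> rintro ⟨h1, h2⟩ <;> exact ⟨fun pc hpc => h1 pc (by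
    first
      | exact h.mem_iff.2 hpc
      | exact h.mem_iff.1 hpc), h2⟩

/-- key algebraic transitivity for ratio comparisons without division -/
lemma cross_trans {xT yT xM yM xS yS : ℝ} (hyT : 0 ≤ yT) (hyS : 0 ≤ yS) (hyM : 0 ≤ yM)
    (hzero : yM = 0 → xT = 0 ∧ yT = 0)
    (h₁ : xT * yM ≤ xM * yT) (h₂ : xM * yS ≤ xS * yM) : xT * yS ≤ xS * yT := by
  rcases eq_or_lt_of_le hyM with h0 | hpos
  · obtain ⟨hx, hy⟩ := hzero h0.symm
    simp [hx, hy]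
  · have hA := mul_le_mul_of_nonneg_right h₁ hyS
    have hB := mul_le_mul_of_nonneg_right h₂ hyT
    have : xT * yS * yM ≤ xS * yT * yM := by nlinarith
    exact le_of_mul_le_mul_right this hpos


def fa (a : Fin n → ℝ) (z : Fin n) : Lex (ℝ × Fin n) := toLex (a z, z)

lemma fa_inj (a : Fin n → ℝ) : Function.Injective (fa a) := by
  intro u v h
  have := congrArg (fun x => (ofLex x).2) h
  simpa [fa] using this

lemma fa_le_a (a : Fin n → ℝ) {u v : Fin n} (h : fa a u ≤ fa a v) : a u ≤ a v := by
  rcases (Prod.Lex.le_iff).1 h with h1 | ⟨h1, _⟩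
  · exact le_of_lt h1
  · exact le_of_eq h1

lemma fa_lt_ne (a : Fin n → ℝ) {u v : Fin n} (h : fa a u < fa a v) : u ≠ v := by
  rintro rfl; exact lt_irrefl _ h

def upC (a : Fin n → ℝ) (Ω C : Finset (Fin n)) : Prop :=
  ∀ u ∈ C, ∀ v ∈ Ω, fa a u ≤ fa a v → v ∈ C

def GoodE (a : Fin n → ℝ) (Ω P₀ : Finset (Fin n)) (E : List (Fin n × Finset (Fin n))) : Prop :=
  ∀ pc ∈ E, pc.1 ∈ P₀ ∧ pc.2 ⊆ Ω ∧ upC a Ω pc.2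

def GoodP (Ω P₀ : Finset (Fin n)) (Ps : List (Fin n × Fin n)) : Prop :=
  ∀ pv ∈ Ps, pv.1 ∈ P₀ ∧ pv.2 ∉ Ω

def Mprop (a : Fin n → ℝ) (Ω P₀ : Finset (Fin n)) (F : Equiv.Perm (Fin n) → ℝ) : Prop :=
  ∀ τ τ' : Equiv.Perm (Fin n),
    (∀ q, q ∉ P₀ → fa a (τ' q) ≤ fa a (τ q) ∧ (τ' q ≠ τ q → τ' q ∈ Ω ∧ τ q ∈ Ω)) →
    F τ' ≤ F τ

def rel : (Fin n × Finset (Fin n)) → (Fin n × Finset (Fin n)) → Prop :=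
  fun tc sc => tc.1 = sc.1 ∧ tc.2 ⊆ sc.2

/- ### iota machinery -/
section Iota

variable (a : Fin n → ℝ) (Ω : Finset (Fin n)) (m k : Fin n)

def nextUp (z : Fin n) : Fin n :=
  if h : (Ω.filter (fun w => fa a z < fa a w)).Nonempty then
    (Finset.exists_min_image _ (fa a) h).choose
  else z

def prevDn (v : Fin n) : Fin n :=
  if h : (Ω.filter (fun w => fa a m ≤ fa a w ∧ fa a w < fa a v)).Nonempty then
    (Finset.exists_max_image _ (fa a) h).choose
  else v

def iotaF (z : Fin n) : Fin n :=
  if z = k then m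
  else if z ∈ Ω ∧ fa a m ≤ fa a z ∧ fa a z < fa a k then nextUp a Ω z else z

def giF (v : Fin n) : Fin n :=
  if v = m then k
  else if v ∈ Ω ∧ fa a m < fa a v ∧ fa a v ≤ fa a k then prevDn a Ω m v else v

variable {a Ω m k}
variable (hm : m ∈ Ω) (hk : k ∈ Ω) (hmk : fa a m < fa a k)

include hk hmk in
lemma nextUp_spec {z : Fin n} (hz : z ∈ Ω) (h1 : fa a m ≤ fa a z) (h2 : fa a z < fa a k) :
    nextUp a Ω z ∈ Ω ∧ fa a z < fa a (nextUp a Ω z) ∧ fa a (nextUp a Ω z) ≤ fa a k ∧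
      (∀ w ∈ Ω, fa a z < fa a w → fa a (nextUp a Ω z) ≤ fa a w) := by
  have hne : (Ω.filter (fun w => fa a z < fa a w)).Nonempty :=
    ⟨k, Finset.mem_filter.2 ⟨hk, h2⟩⟩
  unfold nextUp
  rw [dif_pos hne]
  obtain ⟨hmem, hmin⟩ := (Finset.exists_min_image _ (fa a) hne).choose_spec
  rw [Finset.mem_filter] at hmem
  exact ⟨hmem.1, hmem.2, hmin k (Finset.mem_filter.2 ⟨hk, h2⟩),
    fun w hw hzw => hmin w (Finset.mem_filter.2 ⟨hw, hzw⟩)⟩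

include hm in
lemma prevDn_spec {v : Fin n} (h1 : fa a m < fa a v) :
    prevDn a Ω m v ∈ Ω ∧ fa a m ≤ fa a (prevDn a Ω m v) ∧ fa a (prevDn a Ω m v) < fa a v ∧
      (∀ w ∈ Ω, fa a m ≤ fa a w → fa a w < fa a v → fa a w ≤ fa a (prevDn a Ω m v)) := by
  have hne : (Ω.filter (fun w => fa a m ≤ fa a w ∧ fa a w < fa a v)).Nonempty :=
    ⟨m, Finset.mem_filter.2 ⟨hm, le_refl _, h1⟩⟩
  unfold prevDn
  rw [dif_pos hne]
  obtain ⟨hmem, hmax⟩ := (Finset.exists_max_image _ (fa a) hne).choose_spec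
  rw [Finset.mem_filter] at hmem
  exact ⟨hmem.1, hmem.2.1, hmem.2.2,
    fun w hw hmw hwv => hmax w (Finset.mem_filter.2 ⟨hw, hmw, hwv⟩)⟩

include hm hk hmk in
lemma gi_iota (z : Fin n) : giF a Ω m k (iotaF a Ω m k z) = z := by
  by_cases hzk : z = k
  · subst hzk
    simp [iotaF, giF]
  · by_cases hblock : z ∈ Ω ∧ fa a m ≤ fa a z ∧ fa a z < fa a k
    · obtain ⟨hzΩ, hmz, hzk'⟩ := hblock
      obtain ⟨hNΩ, hzN, hNk, hNmin⟩ := nextUp_spec hk hmk hzΩ hmz hzk'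
      rw [iotaF, if_neg hzk, if_pos ⟨hzΩ, hmz, hzk'⟩]
      have hmN : fa a m < fa a (nextUp a Ω z) := lt_of_le_of_lt hmz hzN
      have hNm : nextUp a Ω z ≠ m := fun he => absurd (he ▸ hmN) (lt_irrefl _)
      rw [giF, if_neg hNm, if_pos ⟨hNΩ, hmN, hNk⟩]
      obtain ⟨hPΩ, hmP, hPN, hPmax⟩ := prevDn_spec hm hmN
      have h1 : fa a z ≤ fa a (prevDn a Ω m (nextUp a Ω z)) := hPmax z hzΩ hmz hzN
      have h2 : fa a (prevDn a Ω m (nextUp a Ω z)) ≤ fa a z := by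
        by_contra hcon
        push_neg at hcon
        exact absurd (hNmin _ hPΩ hcon) (not_le.2 hPN)
      exact fa_inj a (le_antisymm h2 h1)
    · rw [iotaF, if_neg hzk, if_neg hblock]
      have hzm : z ≠ m := by
        rintro rfl; exact hblock ⟨hm, le_refl _, hmk⟩
      have hmid : ¬ (z ∈ Ω ∧ fa a m < fa a z ∧ fa a z ≤ fa a k) := by
        rintro ⟨h1, h2, h3⟩
        refine hblock ⟨h1, le_of_lt h2, lt_of_le_of_ne h3 ?_⟩
        intro he; exact hzk (fa_inj a he)
      rw [giF, if_neg hzm, if_neg hmid]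

include hm hk hmk in
lemma iota_inj : Function.Injective (iotaF a Ω m k) :=
  Function.LeftInverse.injective (g := giF a Ω m k) (gi_iota hm hk hmk)

def iotaP : Equiv.Perm (Fin n) :=
  Equiv.ofBijective _ (Finite.injective_iff_bijective.1 (iota_inj hm hk hmk))

lemma iotaP_apply (z : Fin n) : iotaP hm hk hmk z = iotaF a Ω m k z := rfl

lemma iotaP_symm (v : Fin n) : (iotaP hm hk hmk).symm v = giF a Ω m k v := by
  have h1 : iotaF a Ω m k ((iotaP hm hk hmk).symm v) = v :=
    (iotaP hm hk hmk).apply_symm_apply v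
  have h2 := gi_iota hm hk hmk ((iotaP hm hk hmk).symm v)
  rw [h1] at h2
  exact h2.symm

include hk in
lemma iota_k : iotaF a Ω m k k = m := by simp [iotaF]

include hk in
lemma iota_fixed {v : Fin n} (hv : v ∉ Ω) : iotaF a Ω m k v = v := by
  have hvk : v ≠ k := fun he => hv (he ▸ hk)
  rw [iotaF, if_neg hvk, if_neg (fun hh => hv hh.1)]

include hm hk hmk in
lemma iota_mem_erase {C : Finset (Fin n)} (hC : C ⊆ Ω) (hup : upC a Ω C) {z : Fin n}
    (hz : z ∈ C.erase k) : iotaF a Ω m k z ∈ C.erase m := by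
  obtain ⟨hzk, hzC⟩ := Finset.mem_erase.1 hz
  by_cases hblock : z ∈ Ω ∧ fa a m ≤ fa a z ∧ fa a z < fa a k
  · obtain ⟨hzΩ, hmz, hzk'⟩ := hblock
    obtain ⟨hNΩ, hzN, _, _⟩ := nextUp_spec hk hmk hzΩ hmz hzk'
    rw [iotaF, if_neg hzk, if_pos ⟨hzΩ, hmz, hzk'⟩]
    refine Finset.mem_erase.2 ⟨?_, hup z hzC _ hNΩ (le_of_lt hzN)⟩
    intro he
    exact absurd (he ▸ (lt_of_le_of_lt hmz hzN)) (lt_irrefl _)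
  · rw [iotaF, if_neg hzk, if_neg hblock]
    refine Finset.mem_erase.2 ⟨?_, hzC⟩
    rintro rfl
    exact hblock ⟨hm, le_refl _, hmk⟩

include hm in
lemma gi_le {v : Fin n} (hv : v ≠ m) :
    fa a (giF a Ω m k v) ≤ fa a v ∧
      (giF a Ω m k v ≠ v → giF a Ω m k v ∈ Ω ∧ v ∈ Ω) := by
  by_cases hmid : v ∈ Ω ∧ fa a m < fa a v ∧ fa a v ≤ fa a k
  · obtain ⟨hPΩ, _, hPv, _⟩ := prevDn_spec hm hmid.2.1
    rw [giF, if_neg hv, if_pos hmid]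
    exact ⟨le_of_lt hPv, fun _ => ⟨hPΩ, hmid.1⟩⟩
  · rw [giF, if_neg hv, if_neg hmid]
    exact ⟨le_refl _, fun h => absurd rfl h⟩

include hm in
lemma gi_memOmega {u : Fin n} (hu : u ∈ Ω) (hum : u ≠ m) : giF a Ω m k u ∈ Ω := by
  by_cases hmid : u ∈ Ω ∧ fa a m < fa a u ∧ fa a u ≤ fa a k
  · obtain ⟨hPΩ, _, _, _⟩ := prevDn_spec hm hmid.2.1
    rw [giF, if_neg hum, if_pos hmid]; exact hPΩ
  · rw [giF, if_neg hum, if_neg hmid]; exact hu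

include hm in
lemma gi_mono {u v : Fin n} (hu : u ∈ Ω) (hv : v ∈ Ω) (hum : u ≠ m) (hvm : v ≠ m)
    (huv : fa a u ≤ fa a v) : fa a (giF a Ω m k u) ≤ fa a (giF a Ω m k v) := by
  rcases eq_or_lt_of_le huv with heq | hlt
  · rw [fa_inj a heq]
  by_cases humid : u ∈ Ω ∧ fa a m < fa a u ∧ fa a u ≤ fa a k
  · by_cases hvmid : v ∈ Ω ∧ fa a m < fa a v ∧ fa a v ≤ fa a k
    · obtain ⟨hPuΩ, hmPu, hPuu, _⟩ := prevDn_spec hm humid.2.1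
      obtain ⟨_, _, _, hPvmax⟩ := prevDn_spec hm hvmid.2.1
      rw [giF, if_neg hum, if_pos humid, giF, if_neg hvm, if_pos hvmid]
      exact hPvmax _ hPuΩ hmPu (lt_trans hPuu hlt)
    · obtain ⟨_, _, hPuu, _⟩ := prevDn_spec hm humid.2.1
      rw [giF, if_neg hum, if_pos humid, giF, if_neg hvm, if_neg hvmid]
      exact le_of_lt (lt_trans hPuu hlt)
  · by_cases hvmid : v ∈ Ω ∧ fa a m < fa a v ∧ fa a v ≤ fa a k
    · have humle : fa a u < fa a m := by
        rcases lt_or_ge (fa a m) (fa a u) with h1 | h1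
        · exact absurd ⟨hu, h1, le_trans (le_of_lt hlt) hvmid.2.2⟩ humid
        · exact lt_of_le_of_ne h1 (fun he => hum (fa_inj a he))
      obtain ⟨_, hmPv, _, _⟩ := prevDn_spec hm hvmid.2.1
      rw [giF, if_neg hum, if_neg humid, giF, if_neg hvm, if_pos hvmid]
      exact le_trans (le_of_lt humle) hmPv
    · rw [giF, if_neg hum, if_neg humid, giF, if_neg hvm, if_neg hvmid]
      exact huv

include hm hk hmk in
lemma iota_strict_mono {z w : Fin n} (hz : z ∈ Ω) (hw : w ∈ Ω) (hzk : z ≠ k) (hwk : w ≠ k)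
    (h : fa a z < fa a w) : fa a (iotaF a Ω m k z) < fa a (iotaF a Ω m k w) := by
  by_cases hzb : z ∈ Ω ∧ fa a m ≤ fa a z ∧ fa a z < fa a k
  · obtain ⟨_, hzN, hNk, hNmin⟩ := nextUp_spec hk hmk hzb.1 hzb.2.1 hzb.2.2
    by_cases hwb : w ∈ Ω ∧ fa a m ≤ fa a w ∧ fa a w < fa a k
    · obtain ⟨_, hwN, _, _⟩ := nextUp_spec hk hmk hwb.1 hwb.2.1 hwb.2.2
      rw [iotaF, if_neg hzk, if_pos hzb, iotaF, if_neg hwk, if_pos hwb]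
      exact lt_of_le_of_lt (hNmin w hw h) hwN
    · have hkw : fa a k < fa a w := by
        rcases lt_or_ge (fa a w) (fa a k) with h1 | h1
        · exact absurd ⟨hw, le_trans hzb.2.1 (le_of_lt h), h1⟩ hwb
        · exact lt_of_le_of_ne h1 (fun he => hwk (fa_inj a he).symm)
      rw [iotaF, if_neg hzk, if_pos hzb, iotaF, if_neg hwk, if_neg hwb]
      exact lt_of_le_of_lt hNk hkw
  · by_cases hwb : w ∈ Ω ∧ fa a m ≤ fa a w ∧ fa a w < fa a k
    · have hzm : fa a z < fa a m := by
        rcases le_or_gt (fa a m) (fa a z) with h2 | h2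
        · exact absurd ⟨hz, h2, lt_trans h hwb.2.2⟩ hzb
        · exact h2
      obtain ⟨_, hwN, _, _⟩ := nextUp_spec hk hmk hwb.1 hwb.2.1 hwb.2.2
      rw [iotaF, if_neg hzk, if_neg hzb, iotaF, if_neg hwk, if_pos hwb]
      exact lt_of_lt_of_le hzm (le_trans hwb.2.1 (le_of_lt hwN))
    · rw [iotaF, if_neg hzk, if_neg hzb, iotaF, if_neg hwk, if_neg hwb]
      exact h

include hm hk hmk in
lemma iota_image : (Ω.erase k).image (iotaF a Ω m k) = Ω.erase m := by
  have hsub : (Ω.erase k).image (iotaF a Ω m k) ⊆ Ω.erase m := by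
    intro v hv
    obtain ⟨z, hz, rfl⟩ := Finset.mem_image.1 hv
    obtain ⟨hzk, hzΩ⟩ := Finset.mem_erase.1 hz
    by_cases hzb : z ∈ Ω ∧ fa a m ≤ fa a z ∧ fa a z < fa a k
    · obtain ⟨hNΩ, hzN, _, _⟩ := nextUp_spec hk hmk hzb.1 hzb.2.1 hzb.2.2
      rw [iotaF, if_neg hzk, if_pos hzb]
      exact Finset.mem_erase.2 ⟨fun he => absurd (he ▸ lt_of_le_of_lt hzb.2.1 hzN)
        (lt_irrefl _), hNΩ⟩
    · rw [iotaF, if_neg hzk, if_neg hzb]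
      refine Finset.mem_erase.2 ⟨?_, hzΩ⟩
      rintro rfl
      exact hzb ⟨hm, le_refl _, hmk⟩
  refine Finset.eq_of_subset_of_card_le hsub ?_
  rw [Finset.card_image_of_injective _ (iota_inj hm hk hmk),
    Finset.card_erase_of_mem hm, Finset.card_erase_of_mem hk]

include hm hk hmk in
lemma iota_upC {C : Finset (Fin n)} (hC : C ⊆ Ω) (hup : upC a Ω C) :
    upC a (Ω.erase m) ((C.erase k).image (iotaF a Ω m k)) := by
  intro u' hu' v' hv' hle
  rw [← iota_image hm hk hmk] at hv'
  obtain ⟨w, hw, rfl⟩ := Finset.mem_image.1 hv'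
  obtain ⟨z, hz, rfl⟩ := Finset.mem_image.1 hu'
  obtain ⟨hzk, hzC⟩ := Finset.mem_erase.1 hz
  obtain ⟨hwk, hwΩ⟩ := Finset.mem_erase.1 hw
  have hzw : fa a z ≤ fa a w := by
    by_contra hcon
    push_neg at hcon
    exact absurd hle (not_le.2 (iota_strict_mono hm hk hmk hwΩ (hC hzC) hwk hzk hcon))
  refine Finset.mem_image.2 ⟨w, Finset.mem_erase.2 ⟨hwk, hup z hzC w hwΩ hzw⟩, rfl⟩

end Iota


/- ### gluing lemmas -/

lemma cond_mono : ∀ {ET ES : List (Fin n × Finset (Fin n))}, List.Forall₂ rel ET ES →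
    ∀ {Ps : List (Fin n × Fin n)} {σ : Equiv.Perm (Fin n)}, Cond ET Ps σ → Cond ES Ps σ := by
  intro ET ES h
  induction h with
  | nil => exact fun hc => hc
  | @cons tc sc tl sl hr htl ih =>
    intro Ps σ hc
    obtain ⟨h1, h2⟩ := hc
    have hth : Cond sl Ps σ :=
      ih ⟨fun pc hpc => h1 pc (List.mem_cons_of_mem _ hpc), h2⟩
    refine ⟨fun pc hpc => ?_, h2⟩
    rcases List.mem_cons.1 hpc with rfl | hpc'
    · have hh := h1 tc (List.mem_cons_self)
      rw [← hr.1]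
      exact hr.2 hh
    · exact hth.1 pc hpc'

lemma forall2_refl (E : List (Fin n × Finset (Fin n))) : List.Forall₂ rel E E := by
  induction E with
  | nil => exact List.Forall₂.nil
  | cons hd tl ih => exact List.Forall₂.cons ⟨rfl, subset_rfl⟩ ih

lemma forall2_append : ∀ {l₁ l₂ l₃ l₄ : List (Fin n × Finset (Fin n))},
    List.Forall₂ rel l₁ l₂ → List.Forall₂ rel l₃ l₄ →
    List.Forall₂ rel (l₁ ++ l₃) (l₂ ++ l₄) := by
  intro l₁ l₂ l₃ l₄ h1 h2
  induction h1 with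
  | nil => exact h2
  | cons hr _ ih => exact List.Forall₂.cons hr ih

lemma forall2_map {α : Type} (l : List α) (f g : α → Fin n × Finset (Fin n))
    (h : ∀ x ∈ l, rel (f x) (g x)) : List.Forall₂ rel (l.map f) (l.map g) := by
  induction l with
  | nil => exact List.Forall₂.nil
  | cons hd tl ih =>
    exact List.Forall₂.cons (h hd (List.mem_cons_self))
      (ih fun x hx => h x (List.mem_cons_of_mem _ hx))

section Transport

variable {a : Fin n → ℝ} {Ω : Finset (Fin n)} {m k : Fin n}
variable (hm : m ∈ Ω) (hk : k ∈ Ω) (hmk : fa a m < fa a k)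

include hm hk hmk in
lemma Mprop_tilde {P₀ : Finset (Fin n)} {F : Equiv.Perm (Fin n) → ℝ}
    (hF : Mprop a Ω P₀ F) :
    Mprop a (Ω.erase m) P₀ (fun τ => F ((iotaP hm hk hmk)⁻¹ * τ)) := by
  intro τ τ' hq
  refine hF _ _ fun q hqP => ?_
  obtain ⟨hle, hmem⟩ := hq q hqP
  have e1 : ∀ ρ : Equiv.Perm (Fin n), ((iotaP hm hk hmk)⁻¹ * ρ) q = giF a Ω m k (ρ q) := by
    intro ρ
    rw [Equiv.Perm.mul_apply, ← iotaP_symm hm hk hmk]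
    rfl
  rw [e1, e1]
  by_cases hd : τ' q = τ q
  · rw [hd]
    exact ⟨le_refl _, fun hne => absurd rfl hne⟩
  · obtain ⟨h1, h2⟩ := hmem hd
    obtain ⟨h1n, h1m⟩ := Finset.mem_erase.1 h1
    obtain ⟨h2n, h2m⟩ := Finset.mem_erase.1 h2
    refine ⟨gi_mono hm h1m h2m h1n h2n hle, fun _ => ⟨gi_memOmega hm h1m h1n, gi_memOmega hm h2m h2n⟩⟩

include hm hk hmk in
lemma Mprop_point {P₀ : Finset (Fin n)} {F : Equiv.Perm (Fin n) → ℝ} (hF : Mprop a Ω P₀ F)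
    {p : Fin n} (hpP : p ∈ P₀) (σ : Equiv.Perm (Fin n)) (hσp : σ p = m) :
    F ((iotaP hm hk hmk)⁻¹ * σ) ≤ F σ := by
  refine hF σ _ fun q hq => ?_
  have e1 : ((iotaP hm hk hmk)⁻¹ * σ) q = giF a Ω m k (σ q) := by
    rw [Equiv.Perm.mul_apply, ← iotaP_symm hm hk hmk]
    rfl
  have hqp : q ≠ p := fun he => hq (he ▸ hpP)
  have hσqm : σ q ≠ m := fun he => hqp (σ.injective (he.trans hσp.symm))
  rw [e1]
  obtain ⟨hle, hmem⟩ := gi_le hm (k := k) hσqm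
  exact ⟨hle, fun hne => hmem hne⟩

include hm hk hmk in
lemma WP_transport {E' : List (Fin n × Finset (Fin n))} {Ps : List (Fin n × Fin n)} {p : Fin n}
    (F : Equiv.Perm (Fin n) → ℝ)
    (hnd : p ∉ E'.map Prod.fst)
    (hPs : ∀ pv ∈ Ps, pv.2 ∉ Ω) :
    WP E' ((p, k) :: Ps) F
      = WP (E'.map (fun qC => (qC.1, (qC.2.erase k).image (iotaF a Ω m k)))) ((p, m) :: Ps)
          (fun τ => F ((iotaP hm hk hmk)⁻¹ * τ)) := by
  unfold WP
  refine Fintype.sum_bijective (fun σ => iotaP hm hk hmk * σ)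
    (Group.mulLeft_bijective _) _ _ fun σ => ?_
  have happ : ∀ x, (iotaP hm hk hmk * σ) x = iotaF a Ω m k (σ x) := fun x => rfl
  have hFF : F σ = F ((iotaP hm hk hmk)⁻¹ * (iotaP hm hk hmk * σ)) := by
    rw [inv_mul_cancel_left]
  have hiff : Cond E' ((p, k) :: Ps) σ ↔
      Cond (E'.map (fun qC => (qC.1, (qC.2.erase k).image (iotaF a Ω m k)))) ((p, m) :: Ps)
        (iotaP hm hk hmk * σ) := by
    constructor
    · rintro ⟨h1, h2⟩
      have hσp : σ p = k := h2 (p, k) (List.mem_cons_self)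
      refine ⟨?_, ?_⟩
      · intro pc' hpc'
        obtain ⟨pc, hpc, rfl⟩ := List.mem_map.1 hpc'
        have hq : σ pc.1 ≠ k := by
          intro he
          have h3 : pc.1 = p := σ.injective (he.trans hσp.symm)
          exact hnd (h3 ▸ List.mem_map.2 ⟨pc, hpc, rfl⟩)
        rw [happ]
        exact Finset.mem_image.2 ⟨σ pc.1, Finset.mem_erase.2 ⟨hq, h1 pc hpc⟩, rfl⟩
      · intro pv hpv
        rcases List.mem_cons.1 hpv with rfl | hpv'
        · rw [happ, hσp]
          exact iota_k hk
        · rw [happ, h2 pv (List.mem_cons_of_mem _ hpv')]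
          exact iota_fixed hk (hPs pv hpv')
    · rintro ⟨h1, h2⟩
      have hι : iotaF a Ω m k (σ p) = m := h2 (p, m) (List.mem_cons_self)
      have hσp : σ p = k := by
        refine iota_inj hm hk hmk ?_
        rw [hι, iota_k hk]
      refine ⟨?_, ?_⟩
      · intro pc hpc
        have hh := h1 (pc.1, (pc.2.erase k).image (iotaF a Ω m k))
          (List.mem_map.2 ⟨pc, hpc, rfl⟩)
        rw [happ] at hh
        obtain ⟨z, hz, hze⟩ := Finset.mem_image.1 hh
        have h3 : z = σ pc.1 := iota_inj hm hk hmk hze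
        rw [← h3]
        exact (Finset.mem_erase.1 hz).2
      · intro pv hpv
        rcases List.mem_cons.1 hpv with rfl | hpv'
        · exact hσp
        · have hh := h2 pv (List.mem_cons_of_mem _ hpv')
          rw [happ] at hh
          have h4 : iotaF a Ω m k pv.2 = pv.2 := iota_fixed hk (hPs pv hpv')
          exact iota_inj hm hk hmk (hh.trans h4.symm)
  by_cases hc : Cond E' ((p, k) :: Ps) σ
  · rw [if_pos hc, if_pos (hiff.1 hc)]
    exact hFF
  · rw [if_neg hc, if_neg (fun hh => hc (hiff.2 hh))]

end Transport

lemma WP_erase_pin {E' : List (Fin n × Finset (Fin n))} {Ps : List (Fin n × Fin n)}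
    {p m : Fin n} (F : Equiv.Perm (Fin n) → ℝ) (hnd : p ∉ E'.map Prod.fst) :
    WP E' ((p, m) :: Ps) F
      = WP (E'.map (fun qC => (qC.1, qC.2.erase m))) ((p, m) :: Ps) F := by
  refine WP_congr fun σ => ?_
  constructor
  · rintro ⟨h1, h2⟩
    have hσp : σ p = m := h2 (p, m) (List.mem_cons_self)
    refine ⟨?_, h2⟩
    intro pc' hpc'
    obtain ⟨pc, hpc, rfl⟩ := List.mem_map.1 hpc'
    refine Finset.mem_erase.2 ⟨?_, h1 pc hpc⟩
    intro he
    have h3 : pc.1 = p := σ.injective (he.trans hσp.symm)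
    exact hnd (h3 ▸ List.mem_map.2 ⟨pc, hpc, rfl⟩)
  · rintro ⟨h1, h2⟩
    refine ⟨fun pc hpc => ?_, h2⟩
    exact (Finset.mem_erase.1 (h1 (pc.1, pc.2.erase m) (List.mem_map.2 ⟨pc, hpc, rfl⟩))).2

def KeyStmt (a : Fin n → ℝ) (r : ℕ) : Prop :=
  ∀ (Ω P₀ : Finset (Fin n)) (ES ET : List (Fin n × Finset (Fin n)))
    (Ps : List (Fin n × Fin n)) (F : Equiv.Perm (Fin n) → ℝ),
    ES.length = r → List.Forall₂ rel ET ES →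
    GoodE a Ω P₀ ET → GoodE a Ω P₀ ES → GoodP Ω P₀ Ps →
    ((ES.map Prod.fst) ++ Ps.map Prod.fst).Nodup → Mprop a Ω P₀ F →
    WP ET Ps F * WP ES Ps (fun _ => (1:ℝ)) ≤ WP ES Ps F * WP ET Ps (fun _ => (1:ℝ))

lemma elementary {a : Fin n → ℝ} {r : ℕ} (ihKey : KeyStmt a r)
    {Ω P₀ : Finset (Fin n)} {p : Fin n} {S : Finset (Fin n)} {m : Fin n}
    {E' : List (Fin n × Finset (Fin n))} {Ps : List (Fin n × Fin n)}
    {F : Equiv.Perm (Fin n) → ℝ}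
    (hlen : E'.length = r)
    (hSΩ : S ⊆ Ω) (hSup : upC a Ω S) (hmS : m ∈ S) (hmmin : ∀ z ∈ S, fa a m ≤ fa a z)
    (hE' : GoodE a Ω P₀ E') (hPs : GoodP Ω P₀ Ps)
    (hnd : ((p :: E'.map Prod.fst) ++ Ps.map Prod.fst).Nodup)
    (hpP : p ∈ P₀) (hF : Mprop a Ω P₀ F) :
    WP ((p, S.erase m) :: E') Ps F * WP ((p, S) :: E') Ps (fun _ => (1:ℝ))
      ≤ WP ((p, S) :: E') Ps F * WP ((p, S.erase m) :: E') Ps (fun _ => (1:ℝ)) := by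
  have hndE : p ∉ E'.map Prod.fst := by
    rw [List.cons_append] at hnd
    have h1 := (List.nodup_cons.1 hnd).1
    intro hmem
    exact h1 (List.mem_append.2 (Or.inl hmem))
  have hPsv : ∀ pv ∈ Ps, pv.2 ∉ Ω := fun pv h => (hPs pv h).2
  have crux : ∀ kk ∈ S.erase m,
      WP E' ((p, kk) :: Ps) F * WP E' ((p, m) :: Ps) (fun _ => (1:ℝ))
        ≤ WP E' ((p, m) :: Ps) F * WP E' ((p, kk) :: Ps) (fun _ => (1:ℝ)) := by
    intro k hk
    obtain ⟨hkm, hkS⟩ := Finset.mem_erase.1 hk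
    have hmk : fa a m < fa a k :=
      lt_of_le_of_ne (hmmin k hkS) (fun he => hkm (fa_inj a he).symm)
    have hmΩ : m ∈ Ω := hSΩ hmS
    have hkΩ : k ∈ Ω := hSΩ hkS
    set Ek' := E'.map (fun qC => (qC.1, (qC.2.erase k).image (iotaF a Ω m k))) with hEk'
    set Em' := E'.map (fun qC => (qC.1, qC.2.erase m)) with hEm'
    set Ft := (fun τ => F ((iotaP hmΩ hkΩ hmk)⁻¹ * τ)) with hFt
    have ht1 : WP E' ((p, k) :: Ps) F = WP Ek' ((p, m) :: Ps) Ft :=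
      WP_transport hmΩ hkΩ hmk F hndE hPsv
    have ht2 : WP E' ((p, k) :: Ps) (fun _ => (1:ℝ)) = WP Ek' ((p, m) :: Ps) (fun _ => (1:ℝ)) :=
      WP_transport hmΩ hkΩ hmk (fun _ => (1:ℝ)) hndE hPsv
    have he1 : WP E' ((p, m) :: Ps) F = WP Em' ((p, m) :: Ps) F :=
      WP_erase_pin F hndE
    have he2 : WP E' ((p, m) :: Ps) (fun _ => (1:ℝ)) = WP Em' ((p, m) :: Ps) (fun _ => (1:ℝ)) :=
      WP_erase_pin (fun _ => (1:ℝ)) hndE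
    have hf2 : List.Forall₂ rel Ek' Em' := by
      refine forall2_map E' _ _ fun pc hpc => ⟨rfl, ?_⟩
      intro v hv
      obtain ⟨z, hz, rfl⟩ := Finset.mem_image.1 hv
      exact iota_mem_erase hmΩ hkΩ hmk (hE' pc hpc).2.1 (hE' pc hpc).2.2 hz
    have hGk : GoodE a (Ω.erase m) P₀ Ek' := by
      intro pc' hpc'
      obtain ⟨pc, hpc, rfl⟩ := List.mem_map.1 hpc'
      obtain ⟨hp1, hp2, hp3⟩ := hE' pc hpc
      refine ⟨hp1, ?_, iota_upC hmΩ hkΩ hmk hp2 hp3⟩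
      intro v hv
      obtain ⟨z, hz, rfl⟩ := Finset.mem_image.1 hv
      have h5 := iota_mem_erase hmΩ hkΩ hmk hp2 hp3 hz
      obtain ⟨h6, h7⟩ := Finset.mem_erase.1 h5
      exact Finset.mem_erase.2 ⟨h6, hp2 h7⟩
    have hGm : GoodE a (Ω.erase m) P₀ Em' := by
      intro pc' hpc'
      obtain ⟨pc, hpc, rfl⟩ := List.mem_map.1 hpc'
      obtain ⟨hp1, hp2, hp3⟩ := hE' pc hpc
      refine ⟨hp1, Finset.erase_subset_erase _ hp2, ?_⟩
      intro u hu v hv hle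
      obtain ⟨hvm, hvΩ⟩ := Finset.mem_erase.1 hv
      exact Finset.mem_erase.2 ⟨hvm, hp3 u (Finset.mem_erase.1 hu).2 v hvΩ hle⟩
    have hGP : GoodP (Ω.erase m) P₀ ((p, m) :: Ps) := by
      intro pv hpv
      rcases List.mem_cons.1 hpv with rfl | hpv'
      · exact ⟨hpP, Finset.notMem_erase _ _⟩
      · exact ⟨(hPs pv hpv').1, fun h => (hPs pv hpv').2 (Finset.mem_of_mem_erase h)⟩
    have hndIH : ((Em'.map Prod.fst) ++ ((p, m) :: Ps).map Prod.fst).Nodup := by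
      have hfst : Em'.map Prod.fst = E'.map Prod.fst := by
        rw [hEm', List.map_map]
        rfl
      rw [hfst]
      have hperm : (p :: (E'.map Prod.fst ++ Ps.map Prod.fst)).Perm
          (E'.map Prod.fst ++ p :: Ps.map Prod.fst) := List.perm_middle.symm
      rw [List.cons_append] at hnd
      simpa using hperm.nodup_iff.1 hnd
    have hlenIH : Em'.length = r := by rw [hEm', List.length_map, hlen]
    have hIH := ihKey (Ω.erase m) P₀ Em' Ek' ((p, m) :: Ps) Ft hlenIH hf2 hGk hGm hGP hndIH
      (Mprop_tilde hmΩ hkΩ hmk hF)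
    have hpoint : WP Em' ((p, m) :: Ps) Ft ≤ WP Em' ((p, m) :: Ps) F := by
      refine WP_mono_F fun σ hc => ?_
      have hσp : σ p = m := hc.2 (p, m) (List.mem_cons_self)
      exact Mprop_point hmΩ hkΩ hmk hF hpP σ hσp
    calc WP E' ((p, k) :: Ps) F * WP E' ((p, m) :: Ps) (fun _ => (1:ℝ))
        = WP Ek' ((p, m) :: Ps) Ft * WP Em' ((p, m) :: Ps) (fun _ => (1:ℝ)) := by
          rw [ht1, he2]
      _ ≤ WP Em' ((p, m) :: Ps) Ft * WP Ek' ((p, m) :: Ps) (fun _ => (1:ℝ)) := hIH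
      _ ≤ WP Em' ((p, m) :: Ps) F * WP Ek' ((p, m) :: Ps) (fun _ => (1:ℝ)) :=
          mul_le_mul_of_nonneg_right hpoint (WP_nonneg fun _ => zero_le_one)
      _ = WP E' ((p, m) :: Ps) F * WP E' ((p, k) :: Ps) (fun _ => (1:ℝ)) := by
          rw [← he1, ← ht2]
  rw [WP_decompose p (S.erase m) E' Ps F, WP_decompose p S E' Ps (fun _ => (1:ℝ)),
    WP_decompose p S E' Ps F, WP_decompose p (S.erase m) E' Ps (fun _ => (1:ℝ)),
    ← Finset.add_sum_erase S (fun kk => WP E' ((p, kk) :: Ps) F) hmS,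
    ← Finset.add_sum_erase S (fun kk => WP E' ((p, kk) :: Ps) (fun _ => (1:ℝ))) hmS]
  have h1 : (∑ kk ∈ S.erase m, WP E' ((p, kk) :: Ps) F) * WP E' ((p, m) :: Ps) (fun _ => (1:ℝ))
      ≤ WP E' ((p, m) :: Ps) F * ∑ kk ∈ S.erase m, WP E' ((p, kk) :: Ps) (fun _ => (1:ℝ)) := by
    rw [Finset.sum_mul, Finset.mul_sum]
    exact Finset.sum_le_sum crux
  nlinarith [h1]

lemma SCT {a : Fin n → ℝ} {r : ℕ} (ihKey : KeyStmt a r) :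
    ∀ (c : ℕ) (Ω P₀ : Finset (Fin n)) (p : Fin n) (S T : Finset (Fin n))
      (E' : List (Fin n × Finset (Fin n))) (Ps : List (Fin n × Fin n))
      (F : Equiv.Perm (Fin n) → ℝ),
      E'.length = r → (S \ T).card ≤ c → T ⊆ S →
      S ⊆ Ω → upC a Ω S → upC a Ω T →
      GoodE a Ω P₀ E' → GoodP Ω P₀ Ps →
      ((p :: E'.map Prod.fst) ++ Ps.map Prod.fst).Nodup → p ∈ P₀ → Mprop a Ω P₀ F →
      WP ((p, T) :: E') Ps F * WP ((p, S) :: E') Ps (fun _ => (1:ℝ))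
        ≤ WP ((p, S) :: E') Ps F * WP ((p, T) :: E') Ps (fun _ => (1:ℝ)) := by
  intro c
  induction c with
  | zero =>
    intro Ω P₀ p S T E' Ps F _ hcard hTS _ _ _ _ _ _ _ _
    have h0 : S \ T = ∅ := Finset.card_eq_zero.1 (Nat.le_zero.1 hcard)
    have hST : T = S := Finset.Subset.antisymm hTS (Finset.sdiff_eq_empty_iff_subset.1 h0)
    rw [hST]
  | succ c ih =>
    intro Ω P₀ p S T E' Ps F hlen hcard hTS hSΩ hSup hTup hE' hPs hnd hpP hF
    by_cases h0 : S \ T = ∅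
    · have hST : T = S := Finset.Subset.antisymm hTS (Finset.sdiff_eq_empty_iff_subset.1 h0)
      rw [hST]
    · have hne : (S \ T).Nonempty := Finset.nonempty_iff_ne_empty.2 h0
      have hSne : S.Nonempty := hne.mono (Finset.sdiff_subset)
      obtain ⟨m, hmS, hmmin⟩ := Finset.exists_min_image S (fa a) hSne
      have hmT : m ∉ T := by
        intro hmT'
        obtain ⟨z, hz⟩ := hne
        obtain ⟨hzS, hzT⟩ := Finset.mem_sdiff.1 hz
        exact hzT (hTup m hmT' z (hSΩ hzS) (hmmin z hzS))
      have hTSm : T ⊆ S.erase m := fun t ht =>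
        Finset.mem_erase.2 ⟨fun he => hmT (he ▸ ht), hTS ht⟩
      have hup' : upC a Ω (S.erase m) := by
        intro u hu v hv hle
        obtain ⟨hum, huS⟩ := Finset.mem_erase.1 hu
        refine Finset.mem_erase.2 ⟨?_, hSup u huS v hv hle⟩
        rintro rfl
        exact hum (fa_inj a (le_antisymm hle (hmmin u huS)))
      have hcard' : ((S.erase m) \ T).card ≤ c := by
        have h1 : (S.erase m) \ T = (S \ T).erase m := by
          ext x
          simp only [Finset.mem_sdiff, Finset.mem_erase]
          tauto
        have hmem' : m ∈ S \ T := Finset.mem_sdiff.2 ⟨hmS, hmT⟩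
        rw [h1, Finset.card_erase_of_mem hmem']
        omega
      have hel := elementary ihKey hlen hSΩ hSup hmS hmmin hE' hPs hnd hpP hF
      have hih := ih Ω P₀ p (S.erase m) T E' Ps F hlen hcard' hTSm
        ((Finset.erase_subset _ _).trans hSΩ) hup' hTup hE' hPs hnd hpP hF
      refine cross_trans (WP_nonneg fun _ => zero_le_one) (WP_nonneg fun _ => zero_le_one)
        (WP_nonneg fun _ => zero_le_one) ?_ hih hel
      intro hM0
      have hTleM : WP ((p, T) :: E') Ps (fun _ => (1:ℝ))
          ≤ WP ((p, S.erase m) :: E') Ps (fun _ => (1:ℝ)) := by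
        have hf2' : List.Forall₂ rel ((p, T) :: E') ((p, S.erase m) :: E') :=
          List.Forall₂.cons ⟨rfl, hTSm⟩ (forall2_refl E')
        refine WP_one_mono fun σ hc => cond_mono hf2' hc
      have hT0 : WP ((p, T) :: E') Ps (fun _ => (1:ℝ)) = 0 :=
        le_antisymm (hM0 ▸ hTleM) (WP_nonneg fun _ => zero_le_one)
      exact ⟨WP_eq_zero hT0, hT0⟩

theorem keyP (a : Fin n → ℝ) : ∀ r : ℕ, KeyStmt a r := by
  intro r
  induction r with
  | zero =>
    intro Ω P₀ ES ET Ps F hlen hF2 _ _ _ _ _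
    have hES : ES = [] := List.length_eq_zero_iff.1 hlen
    subst hES
    have hET : ET = [] := List.forall₂_nil_right_iff.1 hF2
    subst hET
    exact le_refl _
  | succ r ih =>
    intro Ω P₀ ES ET Ps F hlen hF2 hGT hGS hGPs hnd hM
    have chain : ∀ (tT tS : List (Fin n × Finset (Fin n))), List.Forall₂ rel tT tS →
        ∀ (pre : List (Fin n × Finset (Fin n))),
        (pre ++ tS).length = r + 1 →
        GoodE a Ω P₀ (pre ++ tT) → GoodE a Ω P₀ (pre ++ tS) →
        (((pre ++ tS).map Prod.fst) ++ Ps.map Prod.fst).Nodup →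
        WP (pre ++ tT) Ps F * WP (pre ++ tS) Ps (fun _ => (1:ℝ))
          ≤ WP (pre ++ tS) Ps F * WP (pre ++ tT) Ps (fun _ => (1:ℝ)) := by
      intro tT tS h
      induction h with
      | nil => intro pre _ _ _ _; exact le_refl _
      | @cons tc sc tl sl hr htl ihc =>
        intro pre hlen' hGT' hGS' hnd'
        obtain ⟨p, S⟩ := sc
        obtain ⟨p', T⟩ := tc
        obtain ⟨hp', hTS⟩ := hr
        simp only at hp' hTS
        subst hp'
        -- facts about (p', S)
        have hmemS : (p', S) ∈ pre ++ (p', S) :: sl := by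
          exact List.mem_append.2 (Or.inr (List.mem_cons_self))
        have hmemT : (p', T) ∈ pre ++ (p', T) :: tl := by
          exact List.mem_append.2 (Or.inr (List.mem_cons_self))
        obtain ⟨hpP, hSΩ, hSup⟩ := hGS' _ hmemS
        obtain ⟨_, hTΩ, hTup⟩ := hGT' _ hmemT
        have hGrest : GoodE a Ω P₀ (pre ++ sl) := by
          intro pc hpc
          rcases List.mem_append.1 hpc with h1 | h1
          · exact hGS' pc (List.mem_append.2 (Or.inl h1))
          · exact hGS' pc (List.mem_append.2 (Or.inr (List.mem_cons_of_mem _ h1)))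
        have hlrest : (pre ++ sl).length = r := by
          rw [List.length_append] at hlen' ⊢
          simp only [List.length_cons] at hlen'
          omega
        -- nodup in the moved-to-front form
        have hndmv : ((p' :: (pre ++ sl).map Prod.fst) ++ Ps.map Prod.fst).Nodup := by
          have hpermfst : ((pre ++ (p', S) :: sl).map Prod.fst).Perm
              (p' :: (pre ++ sl).map Prod.fst) := by
            rw [List.map_append, List.map_cons, List.map_append]
            exact List.perm_middle
          exact ((hpermfst.append_right (Ps.map Prod.fst)).nodup_iff).1 hnd'
        -- step 1 : S -> T at the distinguished slot
        have hstep1 : WP (pre ++ (p', T) :: sl) Ps F * WP (pre ++ (p', S) :: sl) Ps (fun _ => (1:ℝ))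
            ≤ WP (pre ++ (p', S) :: sl) Ps F * WP (pre ++ (p', T) :: sl) Ps (fun _ => (1:ℝ)) := by
          have e1 : ∀ (G : Equiv.Perm (Fin n) → ℝ) (C : Finset (Fin n)),
              WP (pre ++ (p', C) :: sl) Ps G = WP ((p', C) :: (pre ++ sl)) Ps G :=
            fun G C => WP_perm List.perm_middle
          rw [e1 F T, e1 F S, e1 _ T, e1 _ S]
          have hcd : (S \ T).card ≤ S.card := Finset.card_le_card (Finset.sdiff_subset)
          exact SCT ih S.card Ω P₀ p' S T (pre ++ sl) Ps F hlrest hcd hTS hSΩ hSup hTup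
            hGrest hGPs hndmv hpP hM
        -- step 2 : tighten the tail, head fixed at (p', T)
        have hGmidT : GoodE a Ω P₀ (pre ++ (p', T) :: sl) := by
          intro pc hpc
          rcases List.mem_append.1 hpc with h1 | h1
          · exact hGS' pc (List.mem_append.2 (Or.inl h1))
          · rcases List.mem_cons.1 h1 with rfl | h2
            · exact ⟨hpP, hTΩ, hTup⟩
            · exact hGS' pc (List.mem_append.2 (Or.inr (List.mem_cons_of_mem _ h2)))
        have hstep2 : WP (pre ++ (p', T) :: tl) Ps F * WP (pre ++ (p', T) :: sl) Ps (fun _ => (1:ℝ))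
            ≤ WP (pre ++ (p', T) :: sl) Ps F * WP (pre ++ (p', T) :: tl) Ps (fun _ => (1:ℝ)) := by
          have e2 : ∀ l : List (Fin n × Finset (Fin n)),
              pre ++ (p', T) :: l = (pre ++ [(p', T)]) ++ l := by
            intro l
            rw [List.append_assoc]
            rfl
          rw [e2 tl, e2 sl]
          refine ihc (pre ++ [(p', T)]) ?_ ?_ ?_ ?_
          · rw [← e2 sl]
            rw [List.length_append] at hlen' ⊢
            simp only [List.length_cons] at hlen' ⊢
            omega
          · rw [← e2 tl]; exact hGT'
          · rw [← e2 sl]; exact hGmidT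
          · rw [← e2 sl]
            have hfsteq : (pre ++ (p', T) :: sl).map Prod.fst
                = (pre ++ (p', S) :: sl).map Prod.fst := by
              simp [List.map_append]
            rw [hfsteq]
            exact hnd'
        -- combine
        have hzero : WP (pre ++ (p', T) :: sl) Ps (fun _ => (1:ℝ)) = 0 →
            WP (pre ++ (p', T) :: tl) Ps F = 0 ∧
              WP (pre ++ (p', T) :: tl) Ps (fun _ => (1:ℝ)) = 0 := by
          intro hM0
          have hf2' : List.Forall₂ rel (pre ++ (p', T) :: tl) (pre ++ (p', T) :: sl) := by
            exact forall2_append (forall2_refl pre) (List.Forall₂.cons ⟨rfl, subset_rfl⟩ htl)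
          have hTleM : WP (pre ++ (p', T) :: tl) Ps (fun _ => (1:ℝ))
              ≤ WP (pre ++ (p', T) :: sl) Ps (fun _ => (1:ℝ)) :=
            WP_one_mono fun σ hc => cond_mono hf2' hc
          have hT0 : WP (pre ++ (p', T) :: tl) Ps (fun _ => (1:ℝ)) = 0 :=
            le_antisymm (hM0 ▸ hTleM) (WP_nonneg fun _ => zero_le_one)
          exact ⟨WP_eq_zero hT0, hT0⟩
        exact cross_trans (WP_nonneg fun _ => zero_le_one) (WP_nonneg fun _ => zero_le_one)
          (WP_nonneg fun _ => zero_le_one) hzero hstep2 hstep1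
    have := chain ET ES hF2 [] (by simpa using hlen) (by simpa using hGT) (by simpa using hGS)
      (by simpa using hnd)
    simpa using this

end NRTD


open NRTD in
/-- A random vector with the permutation distribution on any
`a ∈ ℝ^n` (`n ≥ 2`) is negatively right-tail dependent (NRTD). -/
theorem permutation_distribution_isNRTD (n : ℕ) (hn : 2 ≤ n) (a : Fin n → ℝ) :
    IsNRTD (unifPerm n) (permVec a) := by
  intro I J hIJ x y hxy hPx hPy φ hφ _
  classical
  set f : Equiv.Perm (Fin n) → ℝ := fun ω => φ (fun i => permVec a ω i.1) with hfdef
  set ET : List (Fin n × Finset (Fin n)) :=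
    J.toList.map (fun j => (j, Finset.univ.filter (fun z => y j < a z))) with hETdef
  set ES : List (Fin n × Finset (Fin n)) :=
    J.toList.map (fun j => (j, Finset.univ.filter (fun z => x j < a z))) with hESdef
  have hcT : ∀ σ : Equiv.Perm (Fin n),
      Cond ET [] σ ↔ (∀ j ∈ J, y j < permVec a σ j) := by
    intro σ
    constructor
    · rintro ⟨h1, _⟩ j hj
      have := h1 (j, Finset.univ.filter (fun z => y j < a z))
        (List.mem_map.2 ⟨j, (Finset.mem_toList).2 hj, rfl⟩)
      exact (Finset.mem_filter.1 this).2
    · intro h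
      refine ⟨?_, fun pv hpv => absurd hpv List.not_mem_nil⟩
      intro pc hpc
      obtain ⟨j, hj, rfl⟩ := List.mem_map.1 hpc
      exact Finset.mem_filter.2 ⟨Finset.mem_univ _, h j ((Finset.mem_toList).1 hj)⟩
  have hcS : ∀ σ : Equiv.Perm (Fin n),
      Cond ES [] σ ↔ (∀ j ∈ J, x j < permVec a σ j) := by
    intro σ
    constructor
    · rintro ⟨h1, _⟩ j hj
      have := h1 (j, Finset.univ.filter (fun z => x j < a z))
        (List.mem_map.2 ⟨j, (Finset.mem_toList).2 hj, rfl⟩)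
      exact (Finset.mem_filter.1 this).2
    · intro h
      refine ⟨?_, fun pv hpv => absurd hpv List.not_mem_nil⟩
      intro pc hpc
      obtain ⟨j, hj, rfl⟩ := List.mem_map.1 hpc
      exact Finset.mem_filter.2 ⟨Finset.mem_univ _, h j ((Finset.mem_toList).1 hj)⟩
  have hcpos : (0:ℝ) < ((n.factorial : ℝ))⁻¹ :=
    inv_pos.2 (Nat.cast_pos.2 (Nat.factorial_pos n))
  -- rewrite Pr and the CExp numerators through WP
  have hPrT : Pr (unifPerm n) (fun ω => ∀ j ∈ J, y j < permVec a ω j)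
      = ((n.factorial : ℝ))⁻¹ * WP ET [] (fun _ => (1:ℝ)) := by
    unfold Pr WP unifPerm
    rw [Finset.mul_sum]
    refine Finset.sum_congr rfl fun σ _ => ?_
    by_cases hA : ∀ j ∈ J, y j < permVec a σ j
    · rw [if_pos hA, if_pos ((hcT σ).2 hA), mul_one]
    · rw [if_neg hA, if_neg (fun hc => hA ((hcT σ).1 hc)), mul_zero]
  have hPrS : Pr (unifPerm n) (fun ω => ∀ j ∈ J, x j < permVec a ω j)
      = ((n.factorial : ℝ))⁻¹ * WP ES [] (fun _ => (1:ℝ)) := by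
    unfold Pr WP unifPerm
    rw [Finset.mul_sum]
    refine Finset.sum_congr rfl fun σ _ => ?_
    by_cases hA : ∀ j ∈ J, x j < permVec a σ j
    · rw [if_pos hA, if_pos ((hcS σ).2 hA), mul_one]
    · rw [if_neg hA, if_neg (fun hc => hA ((hcS σ).1 hc)), mul_zero]
  have hNumT : (∑ ω : Equiv.Perm (Fin n),
        if (∀ j ∈ J, y j < permVec a ω j) then unifPerm n ω * f ω else 0)
      = ((n.factorial : ℝ))⁻¹ * WP ET [] f := by
    unfold WP unifPerm
    rw [Finset.mul_sum]
    refine Finset.sum_congr rfl fun σ _ => ?_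
    by_cases hA : ∀ j ∈ J, y j < permVec a σ j
    · rw [if_pos hA, if_pos ((hcT σ).2 hA)]
    · rw [if_neg hA, if_neg (fun hc => hA ((hcT σ).1 hc)), mul_zero]
  have hNumS : (∑ ω : Equiv.Perm (Fin n),
        if (∀ j ∈ J, x j < permVec a ω j) then unifPerm n ω * f ω else 0)
      = ((n.factorial : ℝ))⁻¹ * WP ES [] f := by
    unfold WP unifPerm
    rw [Finset.mul_sum]
    refine Finset.sum_congr rfl fun σ _ => ?_
    by_cases hA : ∀ j ∈ J, x j < permVec a σ j
    · rw [if_pos hA, if_pos ((hcS σ).2 hA)]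
    · rw [if_neg hA, if_neg (fun hc => hA ((hcS σ).1 hc)), mul_zero]
  have hT1pos : 0 < WP ET [] (fun _ => (1:ℝ)) := by
    rw [hPrT] at hPy
    rcases eq_or_lt_of_le (WP_nonneg (E := ET) (Ps := []) fun _ => zero_le_one) with h0 | h0
    · rw [← h0, mul_zero] at hPy
      exact absurd hPy (lt_irrefl _)
    · exact h0
  have hS1pos : 0 < WP ES [] (fun _ => (1:ℝ)) := by
    rw [hPrS] at hPx
    rcases eq_or_lt_of_le (WP_nonneg (E := ES) (Ps := []) fun _ => zero_le_one) with h0 | h0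
    · rw [← h0, mul_zero] at hPx
      exact absurd hPx (lt_irrefl _)
    · exact h0
  -- the key inequality
  have hkey : WP ET [] f * WP ES [] (fun _ => (1:ℝ))
      ≤ WP ES [] f * WP ET [] (fun _ => (1:ℝ)) := by
    have hlen : ES.length = J.toList.length := by rw [hESdef, List.length_map]
    have hf2 : List.Forall₂ rel ET ES := by
      refine forall2_map J.toList _ _ fun j hj => ⟨rfl, ?_⟩
      intro z hz
      refine Finset.mem_filter.2 ⟨Finset.mem_univ _, ?_⟩
      exact lt_of_le_of_lt (hxy j ((Finset.mem_toList).1 hj)) (Finset.mem_filter.1 hz).2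
    have hGT : GoodE a Finset.univ J ET := by
      intro pc hpc
      obtain ⟨j, hj, rfl⟩ := List.mem_map.1 hpc
      refine ⟨(Finset.mem_toList).1 hj, Finset.filter_subset _ _, ?_⟩
      intro u hu v _ hle
      exact Finset.mem_filter.2 ⟨Finset.mem_univ _,
        lt_of_lt_of_le (Finset.mem_filter.1 hu).2 (fa_le_a a hle)⟩
    have hGS : GoodE a Finset.univ J ES := by
      intro pc hpc
      obtain ⟨j, hj, rfl⟩ := List.mem_map.1 hpc
      refine ⟨(Finset.mem_toList).1 hj, Finset.filter_subset _ _, ?_⟩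
      intro u hu v _ hle
      exact Finset.mem_filter.2 ⟨Finset.mem_univ _,
        lt_of_lt_of_le (Finset.mem_filter.1 hu).2 (fa_le_a a hle)⟩
    have hGP : GoodP Finset.univ J ([] : List (Fin n × Fin n)) :=
      fun pv hpv => absurd hpv List.not_mem_nil
    have hnd : ((ES.map Prod.fst) ++ ([] : List (Fin n × Fin n)).map Prod.fst).Nodup := by
      have h1 : ES.map Prod.fst = J.toList := by
        rw [hESdef, List.map_map]
        exact List.map_id J.toList
      simp [h1, Finset.nodup_toList]
    have hM : Mprop a Finset.univ J f := by
      intro τ τ' h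
      refine hφ ?_
      intro i
      have hiJ : i.1 ∉ J := Finset.disjoint_left.1 hIJ i.2
      exact fa_le_a a (h i.1 hiJ).1
    exact keyP a J.toList.length Finset.univ J ES ET [] f hlen hf2 hGT hGS hGP hnd hM
  -- assemble
  have main : (∑ ω : Equiv.Perm (Fin n),
        if (∀ j ∈ J, y j < permVec a ω j) then unifPerm n ω * f ω else 0)
          * Pr (unifPerm n) (fun ω => ∀ j ∈ J, x j < permVec a ω j)
      ≤ (∑ ω : Equiv.Perm (Fin n),
        if (∀ j ∈ J, x j < permVec a ω j) then unifPerm n ω * f ω else 0)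
          * Pr (unifPerm n) (fun ω => ∀ j ∈ J, y j < permVec a ω j) := by
    rw [hNumT, hNumS, hPrT, hPrS]
    nlinarith [mul_le_mul_of_nonneg_left hkey (le_of_lt (mul_pos hcpos hcpos))]
  simp only [CExp]
  rw [div_le_div_iff₀ hPy hPx]
  convert main using 3 <;> congr
end
end

section
/- Let X be a random vector with the permutation distribution on (1, 2, …, n), let 1 ≤ k < n, and let ψ: ℝ^{n−k} → ℝ be a bounded, coordinatewise increasing, symmetric function. Then for fixed r_2, …, r_k, the conditional expectation E[ψ(X_{k+1}, …, X_n) | X_1 = r_1, X_2 ≥ r_2, …, X_k ≥ r_k] is decreasing in r_1 ∈ {1,…,n}, over those r_1 for which the conditioning event has positive probability. -/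
open scoped Classical
open Finset

noncomputable section

namespace PermAux

variable {n : ℕ}

variable {n : ℕ}

def fill (P S : Finset (Fin n)) (ok : Fin n → Fin n → Prop) (V : Finset (Fin n)) :
    Finset (Fin n → Fin n) :=
  univ.filter fun g =>
    (∀ i ∈ P, g i ∈ V) ∧ Set.InjOn g ↑P ∧ (∀ i ∉ P, g i = i) ∧ ∀ i ∈ S, ok i (g i)

def A (P S : Finset (Fin n)) (ok : Fin n → Fin n → Prop) (V : Finset (Fin n))
    (q x : Fin n) : Finset (Fin n → Fin n) :=
  (fill P S ok V).filter fun g => g q = x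

def num (F : (Fin n → Fin n) → ℝ) (P S : Finset (Fin n)) (ok : Fin n → Fin n → Prop)
    (V : Finset (Fin n)) : ℝ := ∑ g ∈ fill P S ok V, F g

def den (P S : Finset (Fin n)) (ok : Fin n → Fin n → Prop) (V : Finset (Fin n)) : ℝ :=
  ∑ _g ∈ fill P S ok V, (1 : ℝ)

lemma den_nonneg (P S : Finset (Fin n)) (ok : Fin n → Fin n → Prop) (V : Finset (Fin n)) :
    0 ≤ den P S ok V :=
  Finset.sum_nonneg fun _ _ => zero_le_one

lemma mem_fill {P S ok V} {g : Fin n → Fin n} :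
    g ∈ fill P S ok V ↔
      (∀ i ∈ P, g i ∈ V) ∧ Set.InjOn g ↑P ∧ (∀ i ∉ P, g i = i) ∧ ∀ i ∈ S, ok i (g i) := by
  simp [fill]

lemma mem_A {P S ok V q x} {g : Fin n → Fin n} :
    g ∈ A P S ok V q x ↔ g ∈ fill P S ok V ∧ g q = x := by
  simp [A, mem_fill]

lemma update_mem_A {P S : Finset (Fin n)} {ok : Fin n → Fin n → Prop}
    {V W : Finset (Fin n)} {q x y : Fin n} {g : Fin n → Fin n}
    (hq : q ∈ P) (hg : g ∈ A P S ok V q x)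
    (hyW : y ∈ W) (hsub : V.erase x ⊆ W) (hyV : y ∉ V.erase x) (hok : q ∈ S → ok q y) :
    Function.update g q y ∈ A P S ok W q y := by
  rw [mem_A] at hg ⊢
  obtain ⟨hgf, hgq⟩ := hg
  rw [mem_fill] at hgf
  obtain ⟨hmap, hinj, hout, hokg⟩ := hgf
  have hne : ∀ i ∈ (P : Set (Fin n)), i ≠ q → g i ∈ V.erase x := by
    intro i hi hiq
    exact mem_erase.2 ⟨fun hc => hiq (hinj hi hq (by rw [hc, hgq])), hmap i hi⟩
  refine ⟨?_, by simp⟩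
  rw [mem_fill]
  refine ⟨?_, ?_, ?_, ?_⟩
  · intro i hi
    rcases eq_or_ne i q with rfl | h
    · simpa using hyW
    · rw [Function.update_of_ne h]; exact hsub (hne i hi h)
  · intro i hi j hj hij
    simp only [Function.update_apply] at hij
    split_ifs at hij with h1 h2 h2
    · rw [h1, h2]
    · exact absurd (hij ▸ hne j hj h2) hyV
    · exact absurd (hij ▸ hne i hi h1) hyV
    · exact hinj hi hj hij
  · intro i hi
    rw [Function.update_of_ne (fun h : i = q => hi (by rw [h]; exact hq))]
    exact hout i hi
  · intro i hi
    rcases eq_or_ne i q with rfl | h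
    · simpa using hok hi
    · rw [Function.update_of_ne h]; exact hokg i hi

lemma sum_A_update (P S : Finset (Fin n)) (ok : Fin n → Fin n → Prop)
    (V : Finset (Fin n)) (q x y : Fin n)
    (hq : q ∈ P) (hx : x ∈ V) (hy : y ∉ V.erase x)
    (hokx : q ∈ S → ok q x) (hoky : q ∈ S → ok q y)
    (G : (Fin n → Fin n) → ℝ) :
    ∑ g ∈ A P S ok V q x, G (Function.update g q y) =
      ∑ g ∈ A P S ok (insert y (V.erase x)) q y, G g := by
  have herase : (insert y (V.erase x)).erase y = V.erase x := Finset.erase_insert hy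
  apply Finset.sum_nbij' (fun g => Function.update g q y) (fun h => Function.update h q x)
  · intro g hg
    exact update_mem_A hq hg (mem_insert_self _ _) (subset_insert _ _) hy hoky
  · intro h hh
    refine update_mem_A hq hh hx ?_ ?_ hokx
    · rw [herase]; exact erase_subset _ _
    · rw [herase]; exact notMem_erase _ _
  · intro g hg
    have hgq : g q = x := (mem_A.1 hg).2
    funext i
    rcases eq_or_ne i q with rfl | h
    · simpa using hgq.symm
    · simp [Function.update_of_ne h]
  · intro h hh
    have hhq : h q = y := (mem_A.1 hh).2
    funext i
    rcases eq_or_ne i q with rfl | h'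
    · simpa using hhq.symm
    · simp [Function.update_of_ne h']
  · intro g hg; rfl

lemma sum_A_erase (P S : Finset (Fin n)) (ok : Fin n → Fin n → Prop)
    (V : Finset (Fin n)) (q w : Fin n)
    (hqS : q ∈ S) (hqP : q ∈ P) (hw : w ∈ V) (hokw : ok q w)
    (G : (Fin n → Fin n) → ℝ) (hG : ∀ g, G (Function.update g q q) = G g) :
    ∑ g ∈ A P S ok V q w, G g =
      ∑ g ∈ fill (P.erase q) (S.erase q) ok (V.erase w), G g := by
  apply Finset.sum_nbij' (fun g => Function.update g q q) (fun h => Function.update h q w)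
  · intro g hg
    rw [mem_A] at hg
    obtain ⟨hgf, hgq⟩ := hg
    rw [mem_fill] at hgf
    obtain ⟨hmap, hinj, hout, hokg⟩ := hgf
    rw [mem_fill]
    refine ⟨?_, ?_, ?_, ?_⟩
    · intro i hi
      rw [mem_erase] at hi
      rw [Function.update_of_ne hi.1]
      exact mem_erase.2 ⟨fun hc => hi.1 (hinj hi.2 hqP (by rw [hc, hgq])), hmap i hi.2⟩
    · intro i hi j hj hij
      simp only [coe_erase, Set.mem_diff, Set.mem_singleton_iff] at hi hj
      rw [Function.update_of_ne hi.2, Function.update_of_ne hj.2] at hij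
      exact hinj hi.1 hj.1 hij
    · intro i hi
      rcases eq_or_ne i q with rfl | h
      · simp
      · rw [Function.update_of_ne h]
        exact hout i (fun hiP => hi (mem_erase.2 ⟨h, hiP⟩))
    · intro i hi
      rw [mem_erase] at hi
      rw [Function.update_of_ne hi.1]
      exact hokg i hi.2
  · intro h hh
    rw [mem_fill] at hh
    obtain ⟨hmap, hinj, hout, hokg⟩ := hh
    rw [mem_A, mem_fill]
    refine ⟨⟨?_, ?_, ?_, ?_⟩, by simp⟩
    · intro i hi
      rcases eq_or_ne i q with rfl | hne
      · simpa using hw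
      · rw [Function.update_of_ne hne]
        exact (erase_subset _ _) (hmap i (mem_erase.2 ⟨hne, hi⟩))
    · intro i hi j hj hij
      simp only [Function.update_apply] at hij
      split_ifs at hij with h1 h2 h2
      · rw [h1, h2]
      · exact absurd (hij ▸ hmap j (mem_erase.2 ⟨h2, hj⟩)) (notMem_erase _ _)
      · exact absurd (hij ▸ hmap i (mem_erase.2 ⟨h1, hi⟩)) (notMem_erase _ _)
      · exact hinj (by simp [hi, h1]) (by simp [hj, h2]) hij
    · intro i hi
      have hne : i ≠ q := fun hc => hi (hc ▸ hqP)
      rw [Function.update_of_ne hne]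
      exact hout i (fun hc => hi (mem_of_mem_erase hc))
    · intro i hi
      rcases eq_or_ne i q with rfl | hne
      · simpa using hokw
      · rw [Function.update_of_ne hne]
        exact hokg i (mem_erase.2 ⟨hne, hi⟩)
  · intro g hg
    have hgq : g q = w := (mem_A.1 hg).2
    funext i
    rcases eq_or_ne i q with rfl | h
    · simpa using hgq.symm
    · simp [Function.update_of_ne h]
  · intro h hh
    have hhq : h q = q := by
      rw [mem_fill] at hh
      exact hh.2.2.1 q (notMem_erase _ _)
    funext i
    rcases eq_or_ne i q with rfl | h'
    · simpa using hhq.symm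
    · simp [Function.update_of_ne h']
  · intro g hg
    exact (hG g).symm

lemma fill_eq_biUnion_pos (P S : Finset (Fin n)) (ok : Fin n → Fin n → Prop)
    (V : Finset (Fin n)) (x : Fin n) (hx : x ∈ V) (hcard : V.card = P.card) :
    fill P S ok V = P.biUnion (fun q => A P S ok V q x) := by
  ext g
  simp only [mem_biUnion, mem_A]
  constructor
  · intro hg
    obtain ⟨hmap, hinj, hout, hokg⟩ := mem_fill.1 hg
    have himg : P.image g = V := by
      apply Finset.eq_of_subset_of_card_le
      · intro v hv
        obtain ⟨i, hi, rfl⟩ := mem_image.1 hv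
        exact hmap i hi
      · rw [Finset.card_image_of_injOn hinj, hcard]
    obtain ⟨q, hq, hgq⟩ := mem_image.1 (himg ▸ hx)
    exact ⟨q, hq, hg, hgq⟩
  · rintro ⟨q, hq, hg, _⟩
    exact hg

lemma pairwiseDisjoint_A_pos (P S : Finset (Fin n)) (ok : Fin n → Fin n → Prop)
    (V : Finset (Fin n)) (x : Fin n) :
    (P : Set (Fin n)).PairwiseDisjoint (fun q => A P S ok V q x) := by
  intro q hq q' hq' hne
  simp only [Function.onFun]
  rw [Finset.disjoint_left]
  intro g hg hg'
  have h1 := mem_A.1 hg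
  have h2 := mem_A.1 hg'
  have hinj := (mem_fill.1 h1.1).2.1
  exact hne (hinj hq hq' (by rw [h1.2, h2.2]))

lemma fill_eq_biUnion_val (P S : Finset (Fin n)) (ok : Fin n → Fin n → Prop)
    (V : Finset (Fin n)) (q : Fin n) (hq : q ∈ S) (hqP : q ∈ P) :
    fill P S ok V = (V.filter (fun w => ok q w)).biUnion (fun w => A P S ok V q w) := by
  ext g
  simp only [mem_biUnion, mem_A, mem_filter]
  constructor
  · intro hg
    obtain ⟨hmap, hinj, hout, hokg⟩ := mem_fill.1 hg
    exact ⟨g q, ⟨hmap q hqP, hokg q hq⟩, hg, rfl⟩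
  · rintro ⟨w, hw, hg, _⟩
    exact hg

lemma pairwiseDisjoint_A_val (P S : Finset (Fin n)) (ok : Fin n → Fin n → Prop)
    (V : Finset (Fin n)) (q : Fin n) (W : Finset (Fin n)) :
    (W : Set (Fin n)).PairwiseDisjoint (fun w => A P S ok V q w) := by
  intro w hw w' hw' hne
  simp only [Function.onFun]
  rw [Finset.disjoint_left]
  intro g hg hg'
  exact hne (by rw [← (mem_A.1 hg).2, ← (mem_A.1 hg').2])

lemma core (ok : Fin n → Fin n → Prop)
    (hok : ∀ i, ∀ v v' : Fin n, v ≤ v' → ok i v → ok i v') :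
    ∀ m : ℕ, ∀ (F : (Fin n → Fin n) → ℝ) (S P : Finset (Fin n)), S.card = m → S ⊆ P →
      (∀ g g' : Fin n → Fin n, (∀ i ∈ P \ S, g i ≤ g' i) → F g ≤ F g') →
      ∀ V : Finset (Fin n), V.card = P.card → ∀ x y : Fin n, x ∈ V → y ∉ V → x ≤ y →
      num F P S ok V * den P S ok (insert y (V.erase x)) ≤
        num F P S ok (insert y (V.erase x)) * den P S ok V := by
  intro m
  induction m using Nat.strong_induction_on with
  | _ m IH =>
  intro F S P hSm hSP hF V hVP x y hx hy hxy
  set V' := insert y (V.erase x) with hV'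
  have hyVx : y ∉ V.erase x := fun h => hy (mem_of_mem_erase h)
  have hFeq : ∀ g g' : Fin n → Fin n, (∀ i ∈ P \ S, g i = g' i) → F g = F g' := by
    intro g g' h
    exact le_antisymm (hF g g' fun i hi => (h i hi).le) (hF g' g fun i hi => (h i hi).ge)
  -- partitions by position of x (resp. y)
  have hnumV : num F P S ok V = ∑ q ∈ P, ∑ g ∈ A P S ok V q x, F g := by
    rw [num, fill_eq_biUnion_pos P S ok V x hx hVP,
      Finset.sum_biUnion (pairwiseDisjoint_A_pos P S ok V x)]
  have hdenV : den P S ok V = ∑ q ∈ P, ∑ _g ∈ A P S ok V q x, (1 : ℝ) := by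
    rw [den, fill_eq_biUnion_pos P S ok V x hx hVP,
      Finset.sum_biUnion (pairwiseDisjoint_A_pos P S ok V x)]
  have hyV' : y ∈ V' := mem_insert_self _ _
  have hV'P : V'.card = P.card := by
    rw [hV', card_insert_of_notMem hyVx, card_erase_of_mem hx, ← hVP]
    have : 1 ≤ V.card := card_pos.2 ⟨x, hx⟩
    omega
  have hnumV' : num F P S ok V' = ∑ q ∈ P, ∑ g ∈ A P S ok V' q y, F g := by
    rw [num, fill_eq_biUnion_pos P S ok V' y hyV' hV'P,
      Finset.sum_biUnion (pairwiseDisjoint_A_pos P S ok V' y)]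
  have hdenV' : den P S ok V' = ∑ q ∈ P, ∑ _g ∈ A P S ok V' q y, (1 : ℝ) := by
    rw [den, fill_eq_biUnion_pos P S ok V' y hyV' hV'P,
      Finset.sum_biUnion (pairwiseDisjoint_A_pos P S ok V' y)]
  -- matched / extra split
  set p : Fin n → Prop := fun q => q ∉ S ∨ ok q x with hp
  -- per-q facts
  have hmatched_num : ∀ q ∈ P.filter p,
      ∑ g ∈ A P S ok V q x, F g ≤ ∑ g ∈ A P S ok V' q y, F g := by
    intro q hq
    rw [mem_filter] at hq
    obtain ⟨hqP, hqp⟩ := hq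
    have hokx : q ∈ S → ok q x := fun hqS => hqp.resolve_left (by simp [hqS])
    have hoky : q ∈ S → ok q y := fun hqS => hok q x y hxy (hokx hqS)
    rw [← sum_A_update P S ok V q x y hqP hx hyVx hokx hoky F]
    apply Finset.sum_le_sum
    intro g hg
    apply hF
    intro i hi
    rcases eq_or_ne i q with rfl | h
    · rw [Function.update_self, (mem_A.1 hg).2]; exact hxy
    · rw [Function.update_of_ne h]
  have hmatched_den : ∀ q ∈ P.filter p,
      ∑ _g ∈ A P S ok V q x, (1 : ℝ) = ∑ _g ∈ A P S ok V' q y, (1 : ℝ) := by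
    intro q hq
    rw [mem_filter] at hq
    obtain ⟨hqP, hqp⟩ := hq
    have hokx : q ∈ S → ok q x := fun hqS => hqp.resolve_left (by simp [hqS])
    have hoky : q ∈ S → ok q y := fun hqS => hok q x y hxy (hokx hqS)
    exact sum_A_update P S ok V q x y hqP hx hyVx hokx hoky (fun _ => (1 : ℝ))
  have hextra_empty : ∀ q ∈ P.filter (fun q => ¬ p q), A P S ok V q x = ∅ := by
    intro q hq
    rw [mem_filter, hp, not_or, not_not] at hq
    obtain ⟨hqP, hqS, hnok⟩ := hq
    rw [Finset.eq_empty_iff_forall_notMem]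
    intro g hg
    obtain ⟨hgf, hgq⟩ := mem_A.1 hg
    exact hnok (hgq ▸ (mem_fill.1 hgf).2.2.2 q hqS)
  -- key estimate for extra positions
  have hextra_key : ∀ q ∈ P.filter (fun q => ¬ p q),
      num F P S ok V * (∑ _g ∈ A P S ok V' q y, (1 : ℝ)) ≤
        (∑ g ∈ A P S ok V' q y, F g) * den P S ok V := by
    intro q hq
    rw [mem_filter, hp, not_or, not_not] at hq
    obtain ⟨hqP, hqS, hnok⟩ := hq
    by_cases hoky : ok q y
    · -- relate A V' q y to small fillings of V.erase x
      have hVerase : V'.erase y = V.erase x := Finset.erase_insert hyVx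
      have hFinv : ∀ g, F (Function.update g q q) = F g := by
        intro g
        apply hFeq
        intro i hi
        rw [Function.update_of_ne]
        intro hc
        rw [hc] at hi
        exact (mem_sdiff.1 hi).2 hqS
      have hAynum : ∑ g ∈ A P S ok V' q y, F g =
          num F (P.erase q) (S.erase q) ok (V.erase x) := by
        rw [num, ← hVerase]
        exact sum_A_erase P S ok V' q y hqS hqP hyV' hoky F hFinv
      have hAyden : ∑ _g ∈ A P S ok V' q y, (1 : ℝ) =
          den (P.erase q) (S.erase q) ok (V.erase x) := by
        rw [den, ← hVerase]
        exact sum_A_erase P S ok V' q y hqS hqP hyV' hoky (fun _ => (1 : ℝ)) (fun _ => rfl)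
      rw [hAynum, hAyden]
      -- subclaim via decomposition over the value w at q and IH
      have hPS' : (P.erase q) \ (S.erase q) = P \ S := by
        ext i
        simp only [mem_sdiff, mem_erase]
        constructor
        · rintro ⟨⟨hiq, hiP⟩, hiS⟩
          exact ⟨hiP, fun hc => hiS ⟨hiq, hc⟩⟩
        · rintro ⟨hiP, hiS⟩
          have hiq : i ≠ q := fun hc => hiS (hc ▸ hqS)
          exact ⟨⟨hiq, hiP⟩, fun hc => hiS hc.2⟩
      have hF' : ∀ g g' : Fin n → Fin n,
          (∀ i ∈ (P.erase q) \ (S.erase q), g i ≤ g' i) → F g ≤ F g' := by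
        rw [hPS']; exact hF
      have hnumdec : num F P S ok V =
          ∑ w ∈ V.filter (fun w => ok q w),
            num F (P.erase q) (S.erase q) ok (V.erase w) := by
        rw [num, fill_eq_biUnion_val P S ok V q hqS hqP,
          Finset.sum_biUnion (pairwiseDisjoint_A_val P S ok V q _)]
        apply Finset.sum_congr rfl
        intro w hw
        rw [mem_filter] at hw
        exact sum_A_erase P S ok V q w hqS hqP hw.1 hw.2 F hFinv
      have hdendec : den P S ok V =
          ∑ w ∈ V.filter (fun w => ok q w),
            den (P.erase q) (S.erase q) ok (V.erase w) := by
        rw [den, fill_eq_biUnion_val P S ok V q hqS hqP,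
          Finset.sum_biUnion (pairwiseDisjoint_A_val P S ok V q _)]
        apply Finset.sum_congr rfl
        intro w hw
        rw [mem_filter] at hw
        exact sum_A_erase P S ok V q w hqS hqP hw.1 hw.2 (fun _ => (1 : ℝ)) (fun _ => rfl)
      rw [hnumdec, hdendec, Finset.sum_mul, Finset.mul_sum]
      apply Finset.sum_le_sum
      intro w hw
      rw [mem_filter] at hw
      obtain ⟨hwV, hokw⟩ := hw
      have hxw : x ≤ w := by
        by_contra hc
        exact hnok (hok q w x (le_of_not_ge hc) hokw)
      have hxwne : x ≠ w := fun hc => hnok (hc ▸ hokw)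
      have hxVw : x ∈ V.erase w := mem_erase.2 ⟨hxwne, hx⟩
      have hwVw : w ∉ V.erase w := notMem_erase _ _
      have hins : insert w ((V.erase w).erase x) = V.erase x := by
        ext z
        simp only [mem_insert, mem_erase]
        constructor
        · rintro (rfl | ⟨hzx, hzw, hzV⟩)
          · exact ⟨fun hc => hxwne hc.symm, hwV⟩
          · exact ⟨hzx, hzV⟩
        · rintro ⟨hzx, hzV⟩
          rcases eq_or_ne z w with rfl | hzw
          · exact Or.inl rfl
          · exact Or.inr ⟨hzx, hzw, hzV⟩
      have hcard' : (V.erase w).card = (P.erase q).card := by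
        rw [card_erase_of_mem hwV, card_erase_of_mem hqP, hVP]
      have hm0 : 0 < m := hSm ▸ card_pos.2 ⟨q, hqS⟩
      have := IH (m - 1) (by omega) F (S.erase q) (P.erase q)
        (by rw [card_erase_of_mem hqS, hSm])
        (erase_subset_erase _ hSP) hF' (V.erase w) hcard' x w hxVw hwVw hxw
      rw [hins] at this
      exact this
    · -- A V' q y is empty
      have : A P S ok V' q y = ∅ := by
        rw [Finset.eq_empty_iff_forall_notMem]
        intro g hg
        obtain ⟨hgf, hgq⟩ := mem_A.1 hg
        exact hoky (hgq ▸ (mem_fill.1 hgf).2.2.2 q hqS)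
      rw [this]
      simp
  -- combine
  have hsplitV : den P S ok V = ∑ q ∈ P.filter p, ∑ _g ∈ A P S ok V q x, (1 : ℝ) := by
    rw [hdenV, ← Finset.sum_filter_add_sum_filter_not P p]
    have : ∑ q ∈ P.filter (fun q => ¬ p q), ∑ _g ∈ A P S ok V q x, (1 : ℝ) = 0 := by
      apply Finset.sum_eq_zero
      intro q hq
      rw [hextra_empty q hq]
      simp
    rw [this, add_zero]
  have hsplitnumV : num F P S ok V = ∑ q ∈ P.filter p, ∑ g ∈ A P S ok V q x, F g := by
    rw [hnumV, ← Finset.sum_filter_add_sum_filter_not P p]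
    have : ∑ q ∈ P.filter (fun q => ¬ p q), ∑ g ∈ A P S ok V q x, F g = 0 := by
      apply Finset.sum_eq_zero
      intro q hq
      rw [hextra_empty q hq]
      simp
    rw [this, add_zero]
  calc num F P S ok V * den P S ok V'
      = num F P S ok V * (∑ q ∈ P.filter p, ∑ _g ∈ A P S ok V' q y, (1 : ℝ))
        + ∑ q ∈ P.filter (fun q => ¬ p q),
            num F P S ok V * (∑ _g ∈ A P S ok V' q y, (1 : ℝ)) := by
        rw [hdenV', ← Finset.sum_filter_add_sum_filter_not P p, mul_add, Finset.mul_sum, Finset.mul_sum]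
    _ ≤ (∑ q ∈ P.filter p, ∑ g ∈ A P S ok V' q y, F g) * den P S ok V
        + ∑ q ∈ P.filter (fun q => ¬ p q),
            (∑ g ∈ A P S ok V' q y, F g) * den P S ok V := by
        apply add_le_add
        · have h1 : num F P S ok V * (∑ q ∈ P.filter p, ∑ _g ∈ A P S ok V' q y, (1 : ℝ))
              = num F P S ok V * den P S ok V := by
            rw [hsplitV]
            congr 1
            exact (Finset.sum_congr rfl hmatched_den).symm
          rw [h1]
          apply mul_le_mul_of_nonneg_right _ (den_nonneg P S ok V)
          rw [hsplitnumV]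
          exact Finset.sum_le_sum hmatched_num
        · exact Finset.sum_le_sum hextra_key
    _ = num F P S ok V' * den P S ok V := by
        rw [hnumV', ← Finset.sum_filter_add_sum_filter_not P p, add_mul, Finset.sum_mul, Finset.sum_mul]


lemma Pr_unif (A : Equiv.Perm (Fin n) → Prop) :
    Pr (unifPerm n) A = ((univ.filter A).card : ℝ) * (n.factorial : ℝ)⁻¹ := by
  rw [Pr, ← Finset.sum_filter]
  simp [unifPerm, mul_comm]

lemma card_pos_of_Pr_pos {A : Equiv.Perm (Fin n) → Prop}
    (hA : 0 < Pr (unifPerm n) A) : 0 < (((univ.filter A).card : ℝ)) := by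
  rw [Pr_unif] at hA
  by_contra h
  push_neg at h
  have : ((univ.filter A).card : ℝ) = 0 := le_antisymm h (by positivity)
  rw [this, zero_mul] at hA
  exact lt_irrefl _ hA

lemma CExp_unif (A : Equiv.Perm (Fin n) → Prop) (f : Equiv.Perm (Fin n) → ℝ) :
    CExp (unifPerm n) A f =
      (∑ σ ∈ univ.filter A, f σ) / ((univ.filter A).card : ℝ) := by
  rw [CExp, Pr_unif]
  have h1 : ∑ ω : Equiv.Perm (Fin n), (if A ω then unifPerm n ω * f ω else 0) =
      (n.factorial : ℝ)⁻¹ * ∑ σ ∈ univ.filter A, f σ := by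
    rw [← Finset.sum_filter, Finset.mul_sum]
    apply Finset.sum_congr rfl
    intro σ _
    simp [unifPerm]
  rw [h1]
  have hfac : ((n.factorial : ℝ))⁻¹ ≠ 0 := by positivity
  rw [mul_comm ((n.factorial : ℝ))⁻¹ _, mul_div_mul_right _ _ hfac]


lemma sum_event (n k : ℕ) (hk1 : 1 ≤ k) (hkn : k < n) (r : Fin n → ℝ)
    (c : ℕ) (hc1 : 1 ≤ c) (hcn : c ≤ n) (G : (Fin n → Fin n) → ℝ)
    (hG : ∀ g, G (Function.update g (⟨0, Nat.zero_lt_of_lt hkn⟩ : Fin n) (⟨0, Nat.zero_lt_of_lt hkn⟩ : Fin n)) = G g) :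
    (∑ σ ∈ univ.filter (fun σ : Equiv.Perm (Fin n) =>
        permVec (fun i : Fin n => (i.1 + 1 : ℝ)) σ ⟨0, Nat.zero_lt_of_lt hkn⟩ = (c : ℝ) ∧
        ∀ i : Fin n, 0 < i.1 → i.1 < k →
          r i ≤ permVec (fun i : Fin n => (i.1 + 1 : ℝ)) σ i), G ⇑σ)
    = ∑ g ∈ fill (univ.erase (⟨0, Nat.zero_lt_of_lt hkn⟩ : Fin n))
        (univ.filter fun i : Fin n => 0 < i.1 ∧ i.1 < k)
        (fun i v => r i ≤ (v.1 : ℝ) + 1) (univ.erase (⟨c - 1, by omega⟩ : Fin n)), G g := by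
  have hn : 0 < n := by omega
  set z : Fin n := ⟨0, Nat.zero_lt_of_lt hkn⟩ with hz
  set c' : Fin n := ⟨c - 1, by omega⟩ with hc'
  have hmemP : ∀ i : Fin n, i ∈ univ.erase z ↔ i ≠ z := by
    intro i; simp
  apply Finset.sum_bij' (i := fun (σ : Equiv.Perm (Fin n)) _ => Function.update ⇑σ z z)
    (j := fun g hg => Equiv.ofBijective (fun i => if i = z then c' else g i) (by
      rw [mem_fill] at hg
      obtain ⟨hmap, hinj, hout, hok⟩ := hg
      apply Finite.injective_iff_bijective.1
      intro i j hij
      simp only at hij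
      split_ifs at hij with h1 h2 h2
      · rw [h1, h2]
      · exact absurd (hij ▸ hmap j ((hmemP j).2 h2)) (by simp)
      · exact absurd (hij ▸ hmap i ((hmemP i).2 h1)) (by simp)
      · exact hinj (by simpa using h1) (by simpa using h2) hij))
  case hi =>
    intro σ hσ
    rw [mem_filter] at hσ
    obtain ⟨-, hev, hmid⟩ := hσ
    have hσz : σ z = c' := by
      simp only [permVec] at hev
      have : ((σ z).1 : ℝ) + 1 = (c : ℝ) := hev
      have h2 : (σ z).1 + 1 = c := by exact_mod_cast this
      exact Fin.ext (by simp [hc']; omega)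
    rw [mem_fill]
    refine ⟨?_, ?_, ?_, ?_⟩
    · intro i hi
      rw [hmemP] at hi
      rw [Function.update_of_ne hi]
      simp only [mem_erase, mem_univ, and_true]
      intro hcon
      exact hi (σ.injective (by rw [hcon, hσz]))
    · intro i hi j hj hij
      simp only [coe_erase, Set.mem_diff, Set.mem_singleton_iff] at hi hj
      rw [Function.update_of_ne hi.2, Function.update_of_ne hj.2] at hij
      exact σ.injective hij
    · intro i hi
      rw [hmemP, not_not] at hi
      rw [hi]
      simp
    · intro i hi
      rw [mem_filter] at hi
      have hiz : i ≠ z := by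
        intro hcon
        rw [hcon] at hi
        simp [hz] at hi
      rw [Function.update_of_ne hiz]
      exact hmid i hi.2.1 hi.2.2
  case hj =>
    intro g hg
    have hgmem := hg
    rw [mem_fill] at hgmem
    obtain ⟨hmap, hinj, hout, hok⟩ := hgmem
    rw [mem_filter]
    refine ⟨mem_univ _, ?_, ?_⟩
    · show permVec _ _ _ = _
      simp only [permVec, Equiv.ofBijective_apply]
      simp only [if_true, eq_self_iff_true, if_pos]
      have hcast : ((c - 1 : ℕ) : ℝ) + 1 = (c : ℝ) := by
        rw [Nat.cast_sub hc1]; push_cast; ring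
      exact hcast
    · intro i h0 hik
      have hiz : i ≠ z := by
        intro hcon; rw [hcon] at h0; simp [hz] at h0
      show (r i ≤ _)
      simp only [permVec, Equiv.ofBijective_apply]
      rw [if_neg hiz]
      exact hok i (by simp [hik, h0])
  case left_neg =>
    intro σ hσ
    rw [mem_filter] at hσ
    obtain ⟨-, hev, -⟩ := hσ
    have hσz : σ z = c' := by
      simp only [permVec] at hev
      have : ((σ z).1 : ℝ) + 1 = (c : ℝ) := hev
      have h2 : (σ z).1 + 1 = c := by exact_mod_cast this
      exact Fin.ext (by simp [hc']; omega)
    apply Equiv.ext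
    intro i
    simp only [Equiv.ofBijective_apply]
    rcases eq_or_ne i z with rfl | h
    · rw [if_pos rfl, hσz]
    · rw [if_neg h, Function.update_of_ne h]
  case right_neg =>
    intro g hg
    rw [mem_fill] at hg
    obtain ⟨hmap, hinj, hout, hok⟩ := hg
    funext i
    rcases eq_or_ne i z with rfl | h
    · rw [Function.update_self]
      exact (hout z (by simp)).symm
    · rw [Function.update_of_ne h]
      simp only [Equiv.ofBijective_apply]
      rw [if_neg h]
  case h =>
    intro σ hσ
    exact (hG ⇑σ).symm


lemma main_ineq (n k : ℕ) (hk1 : 1 ≤ k) (hkn : k < n) (r : Fin n → ℝ)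
    (ψ : (Fin (n - k) → ℝ) → ℝ) (hmono : Monotone ψ)
    (r₁ r₁' : ℕ) (h₁ : 1 ≤ r₁) (h₂ : r₁ ≤ r₁') (h₃ : r₁' ≤ n) (hlt : r₁ < r₁')
    (A A' : Equiv.Perm (Fin n) → Prop)
    (hA : ∀ σ : Equiv.Perm (Fin n), A σ ↔
      (permVec (fun i : Fin n => (i.1 + 1 : ℝ)) σ ⟨0, Nat.zero_lt_of_lt hkn⟩ = (r₁ : ℝ) ∧
        ∀ i : Fin n, 0 < i.1 → i.1 < k →
          r i ≤ permVec (fun i : Fin n => (i.1 + 1 : ℝ)) σ i))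
    (hA' : ∀ σ : Equiv.Perm (Fin n), A' σ ↔
      (permVec (fun i : Fin n => (i.1 + 1 : ℝ)) σ ⟨0, Nat.zero_lt_of_lt hkn⟩ = (r₁' : ℝ) ∧
        ∀ i : Fin n, 0 < i.1 → i.1 < k →
          r i ≤ permVec (fun i : Fin n => (i.1 + 1 : ℝ)) σ i)) :
    (∑ σ ∈ univ.filter A',
        ψ fun j : Fin (n - k) => permVec (fun i : Fin n => (i.1 + 1 : ℝ)) σ
          ⟨k + j.1, Nat.add_lt_of_lt_sub' j.isLt⟩) *
      (∑ _σ ∈ univ.filter A, (1 : ℝ))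
    ≤ (∑ σ ∈ univ.filter A,
        ψ fun j : Fin (n - k) => permVec (fun i : Fin n => (i.1 + 1 : ℝ)) σ
          ⟨k + j.1, Nat.add_lt_of_lt_sub' j.isLt⟩) *
      (∑ _σ ∈ univ.filter A', (1 : ℝ)) := by
  have hn : 0 < n := by omega
  have efA : univ.filter A = univ.filter (fun σ : Equiv.Perm (Fin n) =>
      permVec (fun i : Fin n => (i.1 + 1 : ℝ)) σ ⟨0, Nat.zero_lt_of_lt hkn⟩ = (r₁ : ℝ) ∧
      ∀ i : Fin n, 0 < i.1 → i.1 < k →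
        r i ≤ permVec (fun i : Fin n => (i.1 + 1 : ℝ)) σ i) :=
    Finset.filter_congr (fun σ _ => hA σ)
  have efA' : univ.filter A' = univ.filter (fun σ : Equiv.Perm (Fin n) =>
      permVec (fun i : Fin n => (i.1 + 1 : ℝ)) σ ⟨0, Nat.zero_lt_of_lt hkn⟩ = (r₁' : ℝ) ∧
      ∀ i : Fin n, 0 < i.1 → i.1 < k →
        r i ≤ permVec (fun i : Fin n => (i.1 + 1 : ℝ)) σ i) :=
    Finset.filter_congr (fun σ _ => hA' σ)
  rw [efA, efA']
  have key := core (fun i v => r i ≤ (v.1 : ℝ) + 1)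
    (by
      intro i v v' hvv' hv
      refine hv.trans ?_
      have : (v.1 : ℝ) ≤ (v'.1 : ℝ) := by exact_mod_cast hvv'
      linarith)
    (univ.filter (fun i : Fin n => 0 < i.1 ∧ i.1 < k)).card
    (fun g => ψ (fun j : Fin (n - k) =>
      ((g ⟨k + j.1, Nat.add_lt_of_lt_sub' j.isLt⟩).1 : ℝ) + 1))
    (univ.filter (fun i : Fin n => 0 < i.1 ∧ i.1 < k))
    (univ.erase ⟨0, hn⟩) rfl
    (by
      intro i hi
      rw [mem_filter] at hi
      rw [mem_erase]
      refine ⟨?_, mem_univ _⟩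
      intro hcon
      rw [hcon] at hi
      simp at hi)
    (by
      intro g g' h
      apply hmono
      intro j
      have hjm : (⟨k + j.1, Nat.add_lt_of_lt_sub' j.isLt⟩ : Fin n) ∈
          univ.erase (⟨0, hn⟩ : Fin n) \ univ.filter (fun i : Fin n => 0 < i.1 ∧ i.1 < k) := by
        rw [mem_sdiff, mem_erase, mem_filter]
        refine ⟨⟨?_, mem_univ _⟩, ?_⟩
        · intro hcon
          have : k + j.1 = 0 := by simpa [Fin.mk.injEq] using hcon
          omega
        · simp only [mem_univ, true_and, not_and, not_lt]
          intro
          omega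
      have := h _ hjm
      have hle : ((g ⟨k + j.1, Nat.add_lt_of_lt_sub' j.isLt⟩).1 : ℝ) ≤
          ((g' ⟨k + j.1, Nat.add_lt_of_lt_sub' j.isLt⟩).1 : ℝ) := by exact_mod_cast this
      linarith)
    (univ.erase ⟨r₁' - 1, by omega⟩)
    (by rw [card_erase_of_mem (mem_univ _), card_erase_of_mem (mem_univ _)])
    ⟨r₁ - 1, by omega⟩ ⟨r₁' - 1, by omega⟩
    (by
      refine mem_erase.2 ⟨?_, mem_univ _⟩
      intro hcon
      simp only [Fin.mk.injEq] at hcon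
      omega)
    (notMem_erase _ _)
    (Fin.mk_le_mk.2 (by omega))
  have hxney : (⟨r₁ - 1, by omega⟩ : Fin n) ≠ ⟨r₁' - 1, by omega⟩ := by
    intro hcon
    simp only [Fin.mk.injEq] at hcon
    omega
  have hV' : insert (⟨r₁' - 1, by omega⟩ : Fin n)
      (((univ : Finset (Fin n)).erase ⟨r₁' - 1, by omega⟩).erase ⟨r₁ - 1, by omega⟩) =
      (univ : Finset (Fin n)).erase ⟨r₁ - 1, by omega⟩ := by
    ext w
    simp only [mem_insert, mem_erase, mem_univ, and_true]
    constructor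
    · rintro (rfl | ⟨hwx, -⟩)
      · exact fun hc => hxney hc.symm
      · exact hwx
    · intro hwx
      rcases eq_or_ne w (⟨r₁' - 1, by omega⟩ : Fin n) with rfl | hwy
      · exact Or.inl rfl
      · exact Or.inr ⟨hwx, hwy⟩
  rw [hV'] at key
  have hG : ∀ g : Fin n → Fin n,
      (fun g : Fin n → Fin n => ψ (fun j : Fin (n - k) =>
        ((g ⟨k + j.1, Nat.add_lt_of_lt_sub' j.isLt⟩).1 : ℝ) + 1))
        (Function.update g (⟨0, Nat.zero_lt_of_lt hkn⟩ : Fin n) (⟨0, Nat.zero_lt_of_lt hkn⟩ : Fin n)) =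
      (fun g : Fin n → Fin n => ψ (fun j : Fin (n - k) =>
        ((g ⟨k + j.1, Nat.add_lt_of_lt_sub' j.isLt⟩).1 : ℝ) + 1)) g := by
    intro g
    simp only
    congr 1
    funext j
    have hne : (⟨k + j.1, Nat.add_lt_of_lt_sub' j.isLt⟩ : Fin n) ≠ ⟨0, Nat.zero_lt_of_lt hkn⟩ := by
      intro hcon
      have : k + j.1 = 0 := by simpa [Fin.mk.injEq] using hcon
      omega
    rw [Function.update_of_ne hne]
  have hr1 : 1 ≤ r₁' := le_trans h₁ h₂
  have hrn : r₁ ≤ n := le_trans h₂ h₃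
  have hsum' := sum_event n k hk1 hkn r r₁' hr1 h₃
    (fun g : Fin n → Fin n => ψ (fun j : Fin (n - k) =>
      ((g ⟨k + j.1, Nat.add_lt_of_lt_sub' j.isLt⟩).1 : ℝ) + 1)) hG
  have hsum := sum_event n k hk1 hkn r r₁ h₁ hrn
    (fun g : Fin n → Fin n => ψ (fun j : Fin (n - k) =>
      ((g ⟨k + j.1, Nat.add_lt_of_lt_sub' j.isLt⟩).1 : ℝ) + 1)) hG
  have hden' := sum_event n k hk1 hkn r r₁' hr1 h₃ (fun _ => (1 : ℝ)) (fun _ => rfl)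
  have hden := sum_event n k hk1 hkn r r₁ h₁ hrn (fun _ => (1 : ℝ)) (fun _ => rfl)
  rw [num, num, den, den] at key
  rw [← hsum', ← hsum, ← hden', ← hden] at key
  exact key

end PermAux

/-- For `X` with the permutation distribution on `(1, 2, …, n)`,
`1 ≤ k < n`, and `ψ` bounded, coordinatewise increasing and symmetric, the
conditional expectation `E[ψ(X_{k+1},…,X_n) | X_1 = r₁, X_2 ≥ r_2, …, X_k ≥ r_k]`
is decreasing in `r₁ ∈ {1,…,n}`, over those `r₁` for which the conditioning event
has positive probability. -/
theorem perm_condExp_decreasing_in_first_coordinate (n k : ℕ) (hk1 : 1 ≤ k) (hkn : k < n)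
    (ψ : (Fin (n - k) → ℝ) → ℝ) (hmono : Monotone ψ) (hbdd : ∃ C, ∀ v, |ψ v| ≤ C)
    (hsymm : ∀ (π : Equiv.Perm (Fin (n - k))) (v : Fin (n - k) → ℝ), ψ (v ∘ π) = ψ v)
    (r : Fin n → ℝ) (r₁ r₁' : ℕ) (h₁ : 1 ≤ r₁) (h₂ : r₁ ≤ r₁') (h₃ : r₁' ≤ n)
    (hpos : 0 < Pr (unifPerm n) fun σ =>
        permVec (fun i : Fin n => (i.1 + 1 : ℝ)) σ ⟨0, by omega⟩ = (r₁ : ℝ) ∧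
        ∀ i : Fin n, 0 < i.1 → i.1 < k →
          r i ≤ permVec (fun i : Fin n => (i.1 + 1 : ℝ)) σ i)
    (hpos' : 0 < Pr (unifPerm n) fun σ =>
        permVec (fun i : Fin n => (i.1 + 1 : ℝ)) σ ⟨0, by omega⟩ = (r₁' : ℝ) ∧
        ∀ i : Fin n, 0 < i.1 → i.1 < k →
          r i ≤ permVec (fun i : Fin n => (i.1 + 1 : ℝ)) σ i) :
    CExp (unifPerm n)
        (fun σ =>
          permVec (fun i : Fin n => (i.1 + 1 : ℝ)) σ ⟨0, by omega⟩ = (r₁' : ℝ) ∧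
          ∀ i : Fin n, 0 < i.1 → i.1 < k →
            r i ≤ permVec (fun i : Fin n => (i.1 + 1 : ℝ)) σ i)
        (fun σ => ψ fun j => permVec (fun i : Fin n => (i.1 + 1 : ℝ)) σ
            ⟨k + j.1, by have := j.isLt; omega⟩)
      ≤ CExp (unifPerm n)
        (fun σ =>
          permVec (fun i : Fin n => (i.1 + 1 : ℝ)) σ ⟨0, by omega⟩ = (r₁ : ℝ) ∧
          ∀ i : Fin n, 0 < i.1 → i.1 < k →
            r i ≤ permVec (fun i : Fin n => (i.1 + 1 : ℝ)) σ i)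
        (fun σ => ψ fun j => permVec (fun i : Fin n => (i.1 + 1 : ℝ)) σ
            ⟨k + j.1, by have := j.isLt; omega⟩) := by
  rcases eq_or_lt_of_le h₂ with heq | hlt
  · subst heq
    exact le_refl _
  · rw [PermAux.CExp_unif, PermAux.CExp_unif]
    have hc' := PermAux.card_pos_of_Pr_pos hpos'
    have hc := PermAux.card_pos_of_Pr_pos hpos
    rw [div_le_div_iff₀ hc' hc]
    have hcard_den : ∀ (A : Equiv.Perm (Fin n) → Prop),
        ((univ.filter A).card : ℝ) = ∑ _σ ∈ univ.filter A, (1 : ℝ) := by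
      intro A
      rw [Finset.sum_const, nsmul_eq_mul, mul_one]
    rw [hcard_den, hcard_den]
    exact PermAux.main_ineq n k hk1 hkn r ψ hmono r₁ r₁' h₁ h₂ h₃ hlt _ _
      (fun σ => Iff.rfl) (fun σ => Iff.rfl)
end
end
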